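/- Let n, q → ∞ with q = Θ(n^α) for some 0 < α < 1/3. Then a random word w chosen uniformly from W_{n,q} satisfies W(w) = w_0 asymptotically almost surely; consequently, under the Plancherel-Hecke measure μ_{n,q}, a random shape λ equals the full staircase (q, q−1, ..., 1) asymptotically almost surely. -/

import Mathlib

/-- The simple reflection `s_i = (i, i+1)` in `S_{q+1}`, for a letter `1 ≤ i ≤ q`. -/
def sRef (q i : ℕ) : Equiv.Perm (Fin (q + 1)) :=
  if h : 1 ≤ i ∧ i ≤ q then Equiv.swap ⟨i - 1, by omega⟩ ⟨i, by omega⟩ else 1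

/-- The Coxeter length of a permutation of `{1, …, q+1}`: its number of inversions. -/
def lenPerm (q : ℕ) (π : Equiv.Perm (Fin (q + 1))) : ℕ :=
  (Finset.univ.filter
    (fun p : Fin (q + 1) × Fin (q + 1) => p.1 < p.2 ∧ π p.2 < π p.1)).card

/-- One step of the 0-Hecke (Demazure) product: multiply by `s_i` only if the
Coxeter length increases. -/
def demStep (q : ℕ) (π : Equiv.Perm (Fin (q + 1))) (i : ℕ) : Equiv.Perm (Fin (q + 1)) :=
  if lenPerm q π < lenPerm q (π * sRef q i) then π * sRef q i else π

/-- The permutation `W(w) ∈ S_{q+1}` determined by a word `w` over `{1,…,q}`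
via the 0-Hecke monoid (Demazure product of the letters of `w`). -/
def heckeW (q : ℕ) (w : List ℕ) : Equiv.Perm (Fin (q + 1)) := w.foldl (demStep q) 1


/-- Replace row `i` of `T` by `r`, appending a new row if `i = T.length`. -/
def setRow (T : List (List ℕ)) (i : ℕ) (r : List ℕ) : List (List ℕ) :=
  if i < T.length then T.set i r else T ++ [r]

/-- One pass of Hecke insertion (BKSTY): insert value `x` starting at row `i`,
with `fuel` bounding the number of rows visited. -/
def heckeAux : ℕ → ℕ → List (List ℕ) → ℕ → List (List ℕ)
  | 0, _, T, _ => T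
  | fuel + 1, x, T, i =>
    let R := T.getD i []
    if R.all (· ≤ x) then
      -- terminating step: adjoin `x` at the end of row `i` if this yields an
      -- increasing tableau, otherwise leave the tableau unchanged
      if (x ∉ R) ∧ (i = 0 ∨ (R.length < (T.getD (i - 1) []).length ∧
            (T.getD (i - 1) []).getD R.length 0 < x)) then
        setRow T i (R ++ [x])
      else T
    else
      -- bumping step: `y` is the smallest entry of the row larger than `x`;
      -- replace it by `x` if this yields an increasing tableau; in any case
      -- insert `y` into the next row
      let p := (R.takeWhile (· ≤ x)).length
      let y := R.getD p 0
      let T' := if (p = 0 ∨ R.getD (p - 1) 0 < x) ∧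
            (i = 0 ∨ (T.getD (i - 1) []).getD p 0 < x) then setRow T i (R.set p x) else T
      heckeAux fuel y T' (i + 1)

/-- Hecke insertion of a value `x` into an increasing tableau `T`. -/
def heckeInsert (T : List (List ℕ)) (x : ℕ) : List (List ℕ) :=
  heckeAux (T.length + 1) x T 0

/-- The insertion tableau `P` of a word under the Hecke algorithm. -/
def heckeP (w : List ℕ) : List (List ℕ) := w.foldl heckeInsert []

/-- The shape `Heckeshape w` of the Hecke insertion tableau of `w`. -/
def heckeShape (w : List ℕ) : List ℕ := (heckeP w).map List.length

open Filter

/-- The word over `{1,…,q}` determined by a function `Fin n → Fin q`. -/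
def toWord {n q : ℕ} (w : Fin n → Fin q) : List ℕ := List.ofFn fun i => (w i : ℕ) + 1

/-- The staircase shape `(q, q−1, …, 2, 1)`. -/
def staircase (q : ℕ) : List ℕ := (List.range q).map (fun i => q - i)

section PartA1

variable {q : ℕ}

/-- All strictly ordered pairs. -/
def Mpairs (q : ℕ) : ℕ :=
  (Finset.univ.filter (fun p : Fin (q + 1) × Fin (q + 1) => p.1 < p.2)).card

lemma lenPerm_le_Mpairs (π : Equiv.Perm (Fin (q + 1))) : lenPerm q π ≤ Mpairs q := by
  apply Finset.card_le_card
  intro p hp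
  simp only [Finset.mem_filter, Finset.mem_univ, true_and] at *
  exact hp.1

lemma Mpairs_lt (q : ℕ) : Mpairs q < (q + 1) ^ 2 := by
  have h1 : (Finset.univ.filter (fun p : Fin (q + 1) × Fin (q + 1) => p.1 < p.2)) ⊂
      Finset.univ := by
    refine Finset.ssubset_iff_of_subset (Finset.filter_subset _ _) |>.mpr ?_
    exact ⟨((0 : Fin (q+1)), (0 : Fin (q+1))), Finset.mem_univ _, by simp⟩
  have h2 := Finset.card_lt_card h1
  simpa [Mpairs, Finset.card_univ, sq] using h2

lemma strictMono_perm_eq_id {m : ℕ} (g : Equiv.Perm (Fin (m + 1)))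
    (hg : StrictMono (g : Fin (m + 1) → Fin (m + 1))) : ∀ x, g x = x := by
  have hle : ∀ (f : Equiv.Perm (Fin (m + 1))), StrictMono (f : Fin (m+1) → Fin (m+1)) →
      ∀ x, x ≤ f x := by
    intro f hf x
    induction x using Fin.induction with
    | zero => exact Fin.zero_le _
    | succ i ih =>
      have h1 : f i.castSucc < f i.succ := hf Fin.castSucc_lt_succ
      rw [Fin.le_def] at ih ⊢
      rw [Fin.lt_def] at h1
      simp only [Fin.val_succ, Fin.coe_castSucc] at *
      omega
  have hsymm : StrictMono (g.symm : Fin (m+1) → Fin (m+1)) := by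
    intro a b hab
    rcases lt_trichotomy (g.symm a) (g.symm b) with h | h | h
    · exact h
    · exact absurd (by rw [← g.apply_symm_apply a, ← g.apply_symm_apply b, h]) hab.ne
    · exfalso
      have h2 : g (g.symm b) < g (g.symm a) := hg h
      rw [g.apply_symm_apply, g.apply_symm_apply] at h2
      exact absurd hab (not_lt.mpr h2.le)
  intro x
  have h1 : x ≤ g x := hle g hg x
  have h2 : g x ≤ g.symm (g x) := hle g.symm hsymm (g x)
  rw [g.symm_apply_apply] at h2
  exact le_antisymm h2 h1

lemma eq_revPerm_of_all_inv {π : Equiv.Perm (Fin (q + 1))}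
    (h : ∀ x y : Fin (q + 1), x < y → π y < π x) : π = Fin.revPerm := by
  set g : Equiv.Perm (Fin (q + 1)) := π.trans Fin.revPerm with hgdef
  have hg : StrictMono (g : Fin (q+1) → Fin (q+1)) := by
    intro a b hab
    have : π b < π a := h a b hab
    simpa [hgdef, Fin.rev_lt_rev] using this
  have hid := strictMono_perm_eq_id g hg
  ext x
  have h0 := hid x
  simp only [hgdef, Equiv.trans_apply, Fin.revPerm_apply] at h0
  have h1 : (π x).rev.rev = x.rev := by rw [h0]
  rw [Fin.rev_rev] at h1
  simp only [Fin.revPerm_apply, h1, Fin.val_rev]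

lemma all_inv_of_lenPerm_max {π : Equiv.Perm (Fin (q + 1))}
    (h : Mpairs q ≤ lenPerm q π) : ∀ x y : Fin (q + 1), x < y → π y < π x := by
  have hsub : (Finset.univ.filter
      (fun p : Fin (q + 1) × Fin (q + 1) => p.1 < p.2 ∧ π p.2 < π p.1)) ⊆
      (Finset.univ.filter (fun p : Fin (q + 1) × Fin (q + 1) => p.1 < p.2)) := by
    intro p hp; simp only [Finset.mem_filter, Finset.mem_univ, true_and] at *; exact hp.1
  have := Finset.eq_of_subset_of_card_le hsub h
  intro x y hxy
  have hmem : (x, y) ∈ (Finset.univ.filter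
      (fun p : Fin (q + 1) × Fin (q + 1) => p.1 < p.2)) := by
    simp [hxy]
  rw [← this] at hmem
  simp only [Finset.mem_filter, Finset.mem_univ, true_and] at hmem
  exact hmem.2

lemma lenPerm_revPerm : lenPerm q (Fin.revPerm : Equiv.Perm (Fin (q+1))) = Mpairs q := by
  unfold lenPerm Mpairs
  congr 1
  ext p
  simp only [Finset.mem_filter, Finset.mem_univ, true_and, Fin.revPerm_apply,
    Fin.rev_lt_rev]
  tauto

lemma ord_swap {m : ℕ} {a b x y : Fin m} (hab : (a : ℕ) + 1 = (b : ℕ))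
    (hxy : x < y) (hne : ¬(x = a ∧ y = b)) : Equiv.swap a b x < Equiv.swap a b y := by
  have h1 : Equiv.swap a b x = if x = a then b else if x = b then a else x :=
    Equiv.swap_apply_def a b x
  have h2 : Equiv.swap a b y = if y = a then b else if y = b then a else y :=
    Equiv.swap_apply_def a b y
  rw [Fin.lt_def] at hxy
  rw [Fin.lt_def, h1, h2]
  split_ifs with h3 h4 h5 h6 h7 <;>
    · simp only [Fin.ext_iff, Fin.lt_def, not_and] at *
      omega

lemma lenPerm_mul_swap (π : Equiv.Perm (Fin (q + 1))) {a b : Fin (q + 1)}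
    (hab : (a : ℕ) + 1 = (b : ℕ)) (hasc : π a < π b) :
    lenPerm q (π * Equiv.swap a b) = lenPerm q π + 1 := by
  classical
  have habl : a < b := by rw [Fin.lt_def]; omega
  have key : Finset.univ.filter
      (fun p : Fin (q + 1) × Fin (q + 1) => p.1 < p.2 ∧
        (π * Equiv.swap a b) p.2 < (π * Equiv.swap a b) p.1) =
      insert (a, b) ((Finset.univ.filter
        (fun p : Fin (q + 1) × Fin (q + 1) => p.1 < p.2 ∧ π p.2 < π p.1)).image
          (fun p => (Equiv.swap a b p.1, Equiv.swap a b p.2))) := by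
    ext p
    simp only [Finset.mem_insert, Finset.mem_image, Finset.mem_filter,
      Finset.mem_univ, true_and]
    simp only [Equiv.Perm.mul_apply]
    constructor
    · rintro ⟨hp1, hp2⟩
      by_cases hpa : p = (a, b)
      · exact Or.inl hpa
      · right
        have hne : ¬(p.1 = a ∧ p.2 = b) := by
          intro ⟨u, v⟩
          exact hpa (Prod.ext u v)
        refine ⟨(Equiv.swap a b p.1, Equiv.swap a b p.2),
          ⟨ord_swap hab hp1 hne, hp2⟩, ?_⟩
        show (Equiv.swap a b (Equiv.swap a b p.1), Equiv.swap a b (Equiv.swap a b p.2)) = p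
        rw [Equiv.swap_apply_self, Equiv.swap_apply_self]
    · rintro (rfl | ⟨r, ⟨hr1, hr2⟩, rfl⟩)
      · refine ⟨habl, ?_⟩
        show π (Equiv.swap a b b) < π (Equiv.swap a b a)
        rw [Equiv.swap_apply_left, Equiv.swap_apply_right]
        exact hasc
      · have hrne : ¬(r.1 = a ∧ r.2 = b) := by
          rintro ⟨u, v⟩
          rw [u, v] at hr2
          exact absurd hr2 (not_lt.mpr hasc.le)
        refine ⟨ord_swap hab hr1 hrne, ?_⟩
        show π (Equiv.swap a b (Equiv.swap a b r.2)) < π (Equiv.swap a b (Equiv.swap a b r.1))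
        rw [Equiv.swap_apply_self, Equiv.swap_apply_self]
        exact hr2
  have hinj : Function.Injective
      (fun p : Fin (q+1) × Fin (q+1) => (Equiv.swap a b p.1, Equiv.swap a b p.2)) := by
    intro u v huv
    simp only [Prod.mk.injEq] at huv
    exact Prod.ext ((Equiv.swap a b).injective huv.1) ((Equiv.swap a b).injective huv.2)
  have hnotmem : (a, b) ∉ (Finset.univ.filter
      (fun p : Fin (q + 1) × Fin (q + 1) => p.1 < p.2 ∧ π p.2 < π p.1)).image
        (fun p => (Equiv.swap a b p.1, Equiv.swap a b p.2)) := by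
    simp only [Finset.mem_image, not_exists, not_and]
    rintro r hr hrr
    have h1 : Equiv.swap a b r.1 = a := congrArg Prod.fst hrr
    have h2 : Equiv.swap a b r.2 = b := congrArg Prod.snd hrr
    have e1 : r.1 = b := by
      have := congrArg (Equiv.swap a b) h1
      rwa [Equiv.swap_apply_self, Equiv.swap_apply_left] at this
    have e2 : r.2 = a := by
      have := congrArg (Equiv.swap a b) h2
      rwa [Equiv.swap_apply_self, Equiv.swap_apply_right] at this
    simp only [Finset.mem_filter, Finset.mem_univ, true_and] at hr
    have hlt := hr.1
    rw [e1, e2] at hlt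
    exact absurd hlt (not_lt.mpr habl.le)
  show (Finset.univ.filter
      (fun p : Fin (q + 1) × Fin (q + 1) => p.1 < p.2 ∧
        (π * Equiv.swap a b) p.2 < (π * Equiv.swap a b) p.1)).card = _
  rw [key, Finset.card_insert_of_notMem hnotmem,
    Finset.card_image_of_injective _ hinj]
  rfl

lemma exists_ascent {π : Equiv.Perm (Fin (q + 1))} (h : π ≠ Fin.revPerm) :
    ∃ i, 1 ≤ i ∧ i ≤ q ∧ lenPerm q π < lenPerm q (π * sRef q i) := by
  by_contra hno
  push_neg at hno
  apply h
  have hdesc : ∀ (k : ℕ) (_hk : k < q), π ⟨k + 1, by omega⟩ < π ⟨k, by omega⟩ := by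
    intro k hk
    have hcond : 1 ≤ k + 1 ∧ k + 1 ≤ q := ⟨by omega, by omega⟩
    have hs : sRef q (k + 1) = Equiv.swap ⟨k, by omega⟩ ⟨k + 1, by omega⟩ := by
      rw [sRef, dif_pos hcond]
      norm_num
    have hnk := hno (k + 1) (by omega) (by omega)
    rcases lt_trichotomy (π ⟨k, by omega⟩) (π ⟨k + 1, by omega⟩) with hlt | heq | hgt
    · exfalso
      have := lenPerm_mul_swap π (a := ⟨k, by omega⟩) (b := ⟨k + 1, by omega⟩) rfl hlt
      rw [hs] at hnk
      omega
    · exact absurd (π.injective heq) (by simp [Fin.ext_iff])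
    · exact hgt
  apply eq_revPerm_of_all_inv
  have key : ∀ d x : ℕ, (hx : x + d + 1 < q + 1) →
      π ⟨x + d + 1, hx⟩ < π ⟨x, by omega⟩ := by
    intro d
    induction d with
    | zero => intro x hx; exact hdesc x (by omega)
    | succ d ih =>
      intro x hx
      have h1 : π ⟨x + d + 1 + 1, by omega⟩ < π ⟨x + d + 1, by omega⟩ :=
        hdesc (x + d + 1) (by omega)
      have h2 := ih x (by omega)
      have : π ⟨x + (d + 1) + 1, hx⟩ = π ⟨x + d + 1 + 1, by omega⟩ := by
        congr 1
      rw [this]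
      exact h1.trans h2
  intro x y hxy
  rw [Fin.lt_def] at hxy
  have hlt : (x : ℕ) + ((y : ℕ) - (x : ℕ) - 1) + 1 < q + 1 := by omega
  have hk := key ((y : ℕ) - (x : ℕ) - 1) (x : ℕ) hlt
  have e1 : (⟨(x : ℕ) + ((y : ℕ) - (x : ℕ) - 1) + 1, hlt⟩ : Fin (q + 1)) = y :=
    Fin.ext (by simp; omega)
  have e2 : (⟨(x : ℕ), by omega⟩ : Fin (q + 1)) = x := Fin.ext rfl
  rwa [e1, e2] at hk

lemma lenPerm_demStep_le (π : Equiv.Perm (Fin (q + 1))) (i : ℕ) :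
    lenPerm q π ≤ lenPerm q (demStep q π i) := by
  unfold demStep; split
  · omega
  · exact le_rfl

lemma lenPerm_foldl_le (b : List ℕ) (π : Equiv.Perm (Fin (q + 1))) :
    lenPerm q π ≤ lenPerm q (b.foldl (demStep q) π) := by
  induction b generalizing π with
  | nil => exact le_rfl
  | cons x b ih => exact (lenPerm_demStep_le π x).trans (ih _)

lemma demStep_eq_of_len_eq {π : Equiv.Perm (Fin (q + 1))} {i : ℕ}
    (h : lenPerm q (demStep q π i) = lenPerm q π) : demStep q π i = π := by
  unfold demStep at h ⊢
  by_cases hc : lenPerm q π < lenPerm q (π * sRef q i)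
  · rw [if_pos hc] at h; omega
  · rw [if_neg hc]

lemma foldl_fix_of_len_eq (b : List ℕ) (π : Equiv.Perm (Fin (q + 1)))
    (h : lenPerm q (b.foldl (demStep q) π) = lenPerm q π) :
    b.foldl (demStep q) π = π ∧ ∀ i ∈ b, demStep q π i = π := by
  induction b with
  | nil => exact ⟨rfl, by simp⟩
  | cons x b ih =>
    simp only [List.foldl_cons] at h ⊢
    have h1 : lenPerm q π ≤ lenPerm q (demStep q π x) := lenPerm_demStep_le π x
    have h2 : lenPerm q (demStep q π x) ≤ lenPerm q (b.foldl (demStep q) (demStep q π x)) :=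
      lenPerm_foldl_le _ _
    have h3 : lenPerm q (demStep q π x) = lenPerm q π := by omega
    have h4 : demStep q π x = π := demStep_eq_of_len_eq h3
    rw [h4] at h ⊢
    obtain ⟨hfix, hall⟩ := ih h
    exact ⟨hfix, by
      intro i hi
      rcases List.mem_cons.mp hi with rfl | hi'
      · exact h4
      · exact hall i hi'⟩

lemma block_progress (b : List ℕ) (hb : ∀ i, 1 ≤ i → i ≤ q → i ∈ b)
    (π : Equiv.Perm (Fin (q + 1))) :
    b.foldl (demStep q) π = Fin.revPerm ∨
      lenPerm q π < lenPerm q (b.foldl (demStep q) π) := by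
  by_contra hc
  push_neg at hc
  obtain ⟨h1, h2⟩ := hc
  have heq := le_antisymm h2 (lenPerm_foldl_le b π)
  obtain ⟨hfix, hall⟩ := foldl_fix_of_len_eq b π heq
  have hne : π ≠ Fin.revPerm := by rw [hfix] at h1; exact h1
  obtain ⟨i, h1i, hiq, hinc⟩ := exists_ascent hne
  have hfixi := hall i (hb i h1i hiq)
  unfold demStep at hfixi
  rw [if_pos hinc] at hfixi
  rw [hfixi] at hinc
  omega

lemma demStep_revPerm (i : ℕ) : demStep q (Fin.revPerm) i = Fin.revPerm := by
  unfold demStep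
  split
  · rename_i h
    exfalso
    have := lenPerm_le_Mpairs (q := q) (Fin.revPerm * sRef q i)
    rw [lenPerm_revPerm] at h
    omega
  · rfl

lemma foldl_revPerm (b : List ℕ) :
    b.foldl (demStep q) (Fin.revPerm) = Fin.revPerm := by
  induction b with
  | nil => rfl
  | cons x b ih => simp only [List.foldl_cons, demStep_revPerm, ih]

lemma blocks_revPerm (bs : List (List ℕ)) :
    bs.foldl (fun τ b => b.foldl (demStep q) τ) (Fin.revPerm) = Fin.revPerm := by
  induction bs with
  | nil => rfl
  | cons b bs ih => simp only [List.foldl_cons, foldl_revPerm, ih]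

lemma blocks_progress (bs : List (List ℕ))
    (hbs : ∀ b ∈ bs, ∀ i, 1 ≤ i → i ≤ q → i ∈ b) (π : Equiv.Perm (Fin (q + 1))) :
    bs.foldl (fun τ b => b.foldl (demStep q) τ) π = Fin.revPerm ∨
      lenPerm q π + bs.length ≤
        lenPerm q (bs.foldl (fun τ b => b.foldl (demStep q) τ) π) := by
  induction bs generalizing π with
  | nil => right; simp
  | cons b bs ih =>
    simp only [List.foldl_cons, List.length_cons]
    rcases block_progress b (hbs b (by simp)) π with hrev | hlt
    · left
      rw [hrev]
      exact blocks_revPerm bs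
    · rcases ih (fun c hc => hbs c (by simp [hc])) (b.foldl (demStep q) π) with hrev | hle
      · exact Or.inl hrev
      · right; omega

lemma heckeW_eq_revPerm (bs : List (List ℕ)) (rest : List ℕ)
    (hbs : ∀ b ∈ bs, ∀ i, 1 ≤ i → i ≤ q → i ∈ b) (hlen : Mpairs q < bs.length) :
    heckeW q (bs.flatten ++ rest) = Fin.revPerm := by
  unfold heckeW
  rw [List.foldl_append, List.foldl_flatten]
  have hrev : bs.foldl (fun τ b => b.foldl (demStep q) τ) (1 : Equiv.Perm (Fin (q+1)))
      = Fin.revPerm := by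
    rcases blocks_progress bs hbs 1 with h | h
    · exact h
    · exfalso
      have := lenPerm_le_Mpairs (q := q)
        (bs.foldl (fun τ b => b.foldl (demStep q) τ) 1)
      omega
  rw [hrev]
  exact foldl_revPerm rest

end PartA1
section PartA2

open List

/-- Row `i` of a tableau. -/
def rowOf (T : List (List ℕ)) (i : ℕ) : List ℕ := T.getD i []

/-- The invariants of tableaux arising from Hecke insertion of words over `{1,…,q}`:
rows are nonempty, strictly increasing, with entries in `(r, q]` in row `r`. -/
def Tab (q : ℕ) (T : List (List ℕ)) : Prop :=
  ∀ r, r < T.length →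
    rowOf T r ≠ [] ∧ (rowOf T r).Pairwise (· < ·) ∧ ∀ a ∈ rowOf T r, r < a ∧ a ≤ q

/-- The first `k` rows are the full staircase rows. -/
def rowsFull (q k : ℕ) (T : List (List ℕ)) : Prop :=
  ∀ r, r < k → rowOf T r = List.range' (r + 1) (q - r)

lemma rowOf_eq_getElem {T : List (List ℕ)} {i : ℕ} (h : i < T.length) :
    rowOf T i = T[i] := List.getD_eq_getElem T [] h

lemma rowOf_eq_nil {T : List (List ℕ)} {i : ℕ} (h : T.length ≤ i) :
    rowOf T i = [] := List.getD_eq_default T [] h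

lemma length_le_of_rowsFull {q k : ℕ} {T : List (List ℕ)} (hk : k ≤ q)
    (h : rowsFull q k T) : k ≤ T.length := by
  by_contra hc
  push_neg at hc
  rcases Nat.eq_zero_or_pos k with rfl | hpos
  · omega
  · have h1 := h (k - 1) (by omega)
    have h2 : rowOf T (k - 1) = [] := rowOf_eq_nil (by omega)
    rw [h2] at h1
    have : (List.range' (k - 1 + 1) (q - (k - 1))).length = q - (k - 1) := by
      simp
    rw [← h1] at this
    simp at this
    omega

lemma sorted_getElem_lt {l : List ℕ} (h : l.Pairwise (· < ·)) {i j : ℕ}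
    (hij : i < j) (hj : j < l.length) : l[i]'(by omega) < l[j] :=
  List.pairwise_iff_getElem.mp h i j (by omega) hj hij

lemma sorted_getElem_le {l : List ℕ} (h : l.Pairwise (· < ·)) {i j : ℕ}
    (hij : i ≤ j) (hj : j < l.length) : l[i]'(by omega) ≤ l[j] := by
  rcases Nat.eq_or_lt_of_le hij with rfl | h'
  · exact le_rfl
  · exact (sorted_getElem_lt h h' hj).le

lemma sorted_lb_getElem {l : List ℕ} (h : l.Pairwise (· < ·)) {lo : ℕ}
    (hlb : ∀ a ∈ l, lo < a) : ∀ i (hi : i < l.length), lo + i < l[i] := by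
  intro i
  induction i with
  | zero => intro hi; simpa using hlb l[0] (List.getElem_mem hi)
  | succ i ih =>
    intro hi
    have h1 := ih (by omega)
    have h2 : l[i] < l[i + 1] := sorted_getElem_lt h (by omega) hi
    omega

lemma sorted_length_le {l : List ℕ} (h : l.Pairwise (· < ·)) {lo hi : ℕ}
    (hb : ∀ a ∈ l, lo < a ∧ a ≤ hi) : l.length ≤ hi - lo := by
  by_contra hc
  push_neg at hc
  have h1 := sorted_lb_getElem h (fun a ha => (hb a ha).1) (hi - lo) (by omega)
  have h2 := (hb _ (List.getElem_mem (by omega : hi - lo < l.length))).2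
  omega

lemma length_takeWhile_le' (P : ℕ → Bool) (l : List ℕ) :
    (l.takeWhile P).length ≤ l.length := (l.takeWhile_prefix P).length_le

lemma takeWhile_getElem_pred {P : ℕ → Bool} {l : List ℕ} {j : ℕ}
    (hj : j < (l.takeWhile P).length) :
    P (l[j]'(lt_of_lt_of_le hj (length_takeWhile_le' P l))) = true := by
  have h1 : (l.takeWhile P)[j] = l[j]'(lt_of_lt_of_le hj (length_takeWhile_le' P l)) :=
    (l.takeWhile_prefix P).getElem hj
  rw [← h1]
  exact List.mem_takeWhile_imp (List.getElem_mem hj)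

lemma takeWhile_boundary {P : ℕ → Bool} : ∀ {l : List ℕ}
    (h : (l.takeWhile P).length < l.length),
    P (l[(l.takeWhile P).length]) = false := by
  intro l
  induction l with
  | nil => intro h; simp at h
  | cons a l ih =>
    intro h
    by_cases hPa : P a
    · simp only [List.takeWhile_cons, hPa, if_true, List.length_cons] at h ⊢
      exact ih (by omega)
    · simp only [List.takeWhile_cons, hPa, if_false, List.length_nil] at h ⊢
      simpa using hPa

lemma takeWhile_lt_of_not_all {P : ℕ → Bool} {l : List ℕ} (h : ¬ l.all P) :
    (l.takeWhile P).length < l.length := by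
  rcases Nat.lt_or_ge (l.takeWhile P).length l.length with h' | h'
  · exact h'
  · exfalso
    have heq : l.takeWhile P = l :=
      (l.takeWhile_prefix P).eq_of_length (le_antisymm (length_takeWhile_le' P l) h')
    apply h
    rw [List.all_eq_true]
    intro a ha
    exact List.mem_takeWhile_imp (heq ▸ ha)

lemma pairwise_set {R : List ℕ} {p x : ℕ} (hs : R.Pairwise (· < ·)) (hp : p < R.length)
    (hlow : ∀ j (hj : j < p), R[j]'(by omega) < x)
    (hhigh : ∀ j (hj1 : p < j) (hj2 : j < R.length), x < R[j]) :
    (R.set p x).Pairwise (· < ·) := by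
  rw [List.pairwise_iff_getElem] at hs ⊢
  intro i j hi hj hij
  simp only [List.length_set] at hi hj
  rw [List.getElem_set, List.getElem_set]
  rcases eq_or_ne p i with rfl | h1 <;> rcases eq_or_ne p j with rfl | h2
  · exact absurd hij (lt_irrefl _)
  · rw [if_pos rfl, if_neg h2]; exact hhigh j hij hj
  · rw [if_neg h1, if_pos rfl]; exact hlow i hij
  · rw [if_neg h1, if_neg h2]; exact hs i j hi hj hij

/-! ### setRow lemmas -/

lemma setRow_rowOf_self {T : List (List ℕ)} {i : ℕ} (r : List ℕ) (h : i ≤ T.length) :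
    rowOf (setRow T i r) i = r := by
  unfold setRow rowOf
  rcases Nat.lt_or_ge i T.length with h' | h'
  · rw [if_pos h']
    rw [List.getD_eq_getElem _ _ (by simpa using h'), List.getElem_set_self]
  · have h'' : i = T.length := by omega
    rw [if_neg (by omega), List.getD_eq_getElem _ _ (by simp; omega)]
    subst h''
    simp

lemma setRow_rowOf_ne {T : List (List ℕ)} {i j : ℕ} (r : List ℕ) (h : i ≤ T.length)
    (hne : j ≠ i) : rowOf (setRow T i r) j = rowOf T j := by
  unfold setRow rowOf
  rcases Nat.lt_or_ge i T.length with h' | h'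
  · rw [if_pos h']
    rw [List.getD_eq_getElem?_getD, List.getD_eq_getElem?_getD,
      List.getElem?_set_ne (Ne.symm hne)]
  · rw [if_neg (by omega)]
    have h'' : i = T.length := by omega
    rcases Nat.lt_or_ge j T.length with hj | hj
    · rw [List.getD_eq_getElem?_getD, List.getD_eq_getElem?_getD,
        List.getElem?_append_left hj]
    · rw [List.getD_eq_default _ _ hj, List.getD_eq_default]
      simp only [List.length_append, List.length_cons, List.length_nil]
      omega

lemma setRow_length {T : List (List ℕ)} {i : ℕ} (r : List ℕ) :
    (setRow T i r).length = if i < T.length then T.length else T.length + 1 := by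
  unfold setRow
  split_ifs with h
  · simp
  · simp

lemma setRow_take {T : List (List ℕ)} {i : ℕ} (r : List ℕ) (h : i ≤ T.length) :
    (setRow T i r).take i = T.take i := by
  unfold setRow
  split_ifs with h'
  · apply List.ext_getElem?
    intro j
    rw [List.getElem?_take, List.getElem?_take]
    split_ifs with hj
    · exact List.getElem?_set_ne (by omega)
    · rfl
  · rw [List.take_append_of_le_length h]

/-! ### heckeAux step lemmas -/

lemma heckeAux_append {f x i : ℕ} {T : List (List ℕ)}
    (hall : (T.getD i []).all (· ≤ x))
    (hc : x ∉ T.getD i [] ∧ (i = 0 ∨ ((T.getD i []).length < (T.getD (i - 1) []).length ∧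
      (T.getD (i - 1) []).getD (T.getD i []).length 0 < x))) :
    heckeAux (f + 1) x T i = setRow T i (T.getD i [] ++ [x]) := by
  rw [heckeAux]
  simp only [hall, if_true]
  rw [if_pos hc]

lemma heckeAux_noop {f x i : ℕ} {T : List (List ℕ)}
    (hall : (T.getD i []).all (· ≤ x))
    (hc : ¬(x ∉ T.getD i [] ∧ (i = 0 ∨ ((T.getD i []).length < (T.getD (i - 1) []).length ∧
      (T.getD (i - 1) []).getD (T.getD i []).length 0 < x)))) :
    heckeAux (f + 1) x T i = T := by
  rw [heckeAux]
  simp only [hall, if_true]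
  rw [if_neg hc]

lemma heckeAux_bump {f x i : ℕ} {T : List (List ℕ)}
    (hnall : ¬ (T.getD i []).all (· ≤ x)) :
    heckeAux (f + 1) x T i =
      heckeAux f ((T.getD i []).getD ((T.getD i []).takeWhile (· ≤ x)).length 0)
        (if (((T.getD i []).takeWhile (· ≤ x)).length = 0 ∨
              (T.getD i []).getD (((T.getD i []).takeWhile (· ≤ x)).length - 1) 0 < x) ∧
            (i = 0 ∨ (T.getD (i - 1) []).getD ((T.getD i []).takeWhile (· ≤ x)).length 0 < x)
          then setRow T i ((T.getD i []).set ((T.getD i []).takeWhile (· ≤ x)).length x)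
          else T) (i + 1) := by
  rw [heckeAux]
  simp only [eq_false_of_ne_true (by simpa using hnall : ¬((T.getD i []).all (· ≤ x)) = true)]
  simp

end PartA2
section PartA2b

lemma rowOf_def (T : List (List ℕ)) (i : ℕ) : rowOf T i = T.getD i [] := rfl

lemma heckeAux_zero (x i : ℕ) (T : List (List ℕ)) : heckeAux 0 x T i = T := by
  rw [heckeAux]

lemma heckeAux_length_le : ∀ (f x i : ℕ) (T : List (List ℕ)),
    T.length ≤ (heckeAux f x T i).length := by
  intro f
  induction f with
  | zero => intro x i T; rw [heckeAux_zero]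
  | succ f ih =>
    intro x i T
    by_cases hall : (T.getD i []).all (· ≤ x)
    · by_cases hc : x ∉ T.getD i [] ∧ (i = 0 ∨ ((T.getD i []).length < (T.getD (i - 1) []).length ∧
          (T.getD (i - 1) []).getD (T.getD i []).length 0 < x))
      · rw [heckeAux_append hall hc, setRow_length]
        split_ifs <;> omega
      · rw [heckeAux_noop hall hc]
    · rw [heckeAux_bump hall]
      refine le_trans ?_ (ih _ _ _)
      split_ifs with hcond
      · rw [setRow_length]
        split_ifs <;> omega
      · exact le_rfl

lemma nonnil_of_not_all {x : ℕ} {T : List (List ℕ)} {i : ℕ}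
    (hall : ¬ (T.getD i []).all (· ≤ x)) : i < T.length := by
  by_contra h
  push_neg at h
  rw [List.getD_eq_default _ _ h] at hall
  simp at hall

lemma heckeAux_take : ∀ (f x i : ℕ) (T : List (List ℕ)), i ≤ T.length →
    (heckeAux f x T i).take i = T.take i := by
  intro f
  induction f with
  | zero => intro x i T _; rw [heckeAux_zero]
  | succ f ih =>
    intro x i T hiT
    by_cases hall : (T.getD i []).all (· ≤ x)
    · by_cases hc : x ∉ T.getD i [] ∧ (i = 0 ∨ ((T.getD i []).length < (T.getD (i - 1) []).length ∧
          (T.getD (i - 1) []).getD (T.getD i []).length 0 < x))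
      · rw [heckeAux_append hall hc]
        exact setRow_take _ hiT
      · rw [heckeAux_noop hall hc]
    · rw [heckeAux_bump hall]
      have hiT' : i < T.length := nonnil_of_not_all hall
      set T' := (if (((T.getD i []).takeWhile (· ≤ x)).length = 0 ∨
              (T.getD i []).getD (((T.getD i []).takeWhile (· ≤ x)).length - 1) 0 < x) ∧
            (i = 0 ∨ (T.getD (i - 1) []).getD ((T.getD i []).takeWhile (· ≤ x)).length 0 < x)
          then setRow T i ((T.getD i []).set ((T.getD i []).takeWhile (· ≤ x)).length x)
          else T) with hT'
      have hlen : T'.length = T.length := by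
        rw [hT']
        split_ifs
        · rw [setRow_length, if_pos hiT']
        · rfl
      have h1 : (heckeAux f ((T.getD i []).getD ((T.getD i []).takeWhile (· ≤ x)).length 0)
          T' (i + 1)).take (i + 1) = T'.take (i + 1) := ih _ _ _ (by omega)
      have h2 : T'.take i = T.take i := by
        rw [hT']
        split_ifs
        · exact setRow_take _ (by omega)
        · rfl
      calc (heckeAux f _ T' (i + 1)).take i
          = ((heckeAux f _ T' (i + 1)).take (i + 1)).take i := by
            rw [List.take_take]; congr 1; omega
        _ = (T'.take (i + 1)).take i := by rw [h1]
        _ = T'.take i := by rw [List.take_take]; congr 1; omega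
        _ = T.take i := h2

lemma rowOf_take_eq {T T' : List (List ℕ)} {i j : ℕ} (h : T'.take i = T.take i)
    (hj : j < i) : rowOf T' j = rowOf T j := by
  unfold rowOf
  rw [List.getD_eq_getElem?_getD, List.getD_eq_getElem?_getD]
  have h1 : T'[j]? = (T'.take i)[j]? := by rw [List.getElem?_take, if_pos hj]
  have h2 : T[j]? = (T.take i)[j]? := by rw [List.getElem?_take, if_pos hj]
  rw [h1, h2, h]

lemma tab_setRow {q : ℕ} {T : List (List ℕ)} {i : ℕ} {r : List ℕ} (hT : Tab q T)
    (hi : i ≤ T.length)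
    (hr : r ≠ [] ∧ r.Pairwise (· < ·) ∧ ∀ a ∈ r, i < a ∧ a ≤ q) :
    Tab q (setRow T i r) := by
  intro s hs
  rw [setRow_length] at hs
  by_cases hsi : s = i
  · subst hsi
    rw [setRow_rowOf_self r hi]
    exact hr
  · rw [setRow_rowOf_ne r hi hsi]
    apply hT
    split_ifs at hs with h
    · exact hs
    · omega

lemma heckeAux_tab {q : ℕ} : ∀ (f x i : ℕ) (T : List (List ℕ)), Tab q T →
    i ≤ T.length → i < x → x ≤ q → Tab q (heckeAux f x T i) := by
  intro f
  induction f with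
  | zero => intro x i T hT _ _ _; rw [heckeAux_zero]; exact hT
  | succ f ih =>
    intro x i T hT hiT hix hxq
    by_cases hall : (T.getD i []).all (· ≤ x)
    · by_cases hc : x ∉ T.getD i [] ∧ (i = 0 ∨ ((T.getD i []).length < (T.getD (i - 1) []).length ∧
          (T.getD (i - 1) []).getD (T.getD i []).length 0 < x))
      · rw [heckeAux_append hall hc]
        have hmemR : ∀ a ∈ T.getD i [], i < a ∧ a ≤ q := by
          intro a ha
          rcases Nat.lt_or_ge i T.length with h' | h'
          · exact (hT i h').2.2 a ha
          · rw [List.getD_eq_default _ _ h'] at ha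
            simp at ha
        have hRs : (T.getD i []).Pairwise (· < ·) := by
          rcases Nat.lt_or_ge i T.length with h' | h'
          · exact (hT i h').2.1
          · rw [List.getD_eq_default _ _ h']
            exact List.Pairwise.nil
        apply tab_setRow hT hiT
        refine ⟨by simp, ?_, ?_⟩
        · rw [List.pairwise_append]
          refine ⟨hRs, by simp, ?_⟩
          intro a ha b hb
          simp only [List.mem_singleton] at hb
          subst hb
          have h1 : a ≤ b := by
            have := List.all_eq_true.mp hall a ha
            simpa using this
          have h2 : a ≠ b := fun h => hc.1 (h ▸ ha)
          omega
        · intro a ha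
          rcases List.mem_append.mp ha with ha' | ha'
          · exact hmemR a ha'
          · simp only [List.mem_singleton] at ha'
            subst ha'
            exact ⟨hix, hxq⟩
      · rw [heckeAux_noop hall hc]; exact hT
    · rw [heckeAux_bump hall]
      have hiT' : i < T.length := nonnil_of_not_all hall
      have hp : ((T.getD i []).takeWhile (· ≤ x)).length < (T.getD i []).length :=
        takeWhile_lt_of_not_all hall
      have hy : (T.getD i []).getD ((T.getD i []).takeWhile (· ≤ x)).length 0 =
          (T.getD i [])[((T.getD i []).takeWhile (· ≤ x)).length] :=
        List.getD_eq_getElem _ _ hp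
      have hxy : x < (T.getD i [])[((T.getD i []).takeWhile (· ≤ x)).length] := by
        have := takeWhile_boundary (P := fun a => a ≤ x) hp
        simpa using this
      have hsorted : (T.getD i []).Pairwise (· < ·) := (hT i hiT').2.1
      have hbounds := (hT i hiT').2.2
      have hymem : (T.getD i [])[((T.getD i []).takeWhile (· ≤ x)).length] ∈ T.getD i [] :=
        List.getElem_mem hp
      have hyq := hbounds _ hymem
      have hTab' : Tab q (if (((T.getD i []).takeWhile (· ≤ x)).length = 0 ∨
              (T.getD i []).getD (((T.getD i []).takeWhile (· ≤ x)).length - 1) 0 < x) ∧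
            (i = 0 ∨ (T.getD (i - 1) []).getD ((T.getD i []).takeWhile (· ≤ x)).length 0 < x)
          then setRow T i ((T.getD i []).set ((T.getD i []).takeWhile (· ≤ x)).length x)
          else T) := by
        split_ifs with hcond
        · apply tab_setRow hT (le_of_lt hiT')
          refine ⟨?_, ?_, ?_⟩
          · intro hnil
            have := congrArg List.length hnil
            simp only [List.length_set, List.length_nil] at this
            omega
          · apply pairwise_set hsorted hp
            · intro j hj
              rcases hcond.1 with h0 | hlt
              · omega
              · have h1 : (T.getD i []).getD (((T.getD i []).takeWhile (· ≤ x)).length - 1) 0 =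
                    (T.getD i [])[((T.getD i []).takeWhile (· ≤ x)).length - 1] :=
                  List.getD_eq_getElem _ _ (by omega)
                rw [h1] at hlt
                calc (T.getD i [])[j] ≤
                    (T.getD i [])[((T.getD i []).takeWhile (· ≤ x)).length - 1] :=
                      sorted_getElem_le hsorted (by omega) (by omega)
                  _ < x := hlt
            · intro j hj1 hj2
              calc x < (T.getD i [])[((T.getD i []).takeWhile (· ≤ x)).length] := hxy
                _ ≤ (T.getD i [])[j] := sorted_getElem_le hsorted (by omega) hj2
          · intro a ha
            rw [List.mem_iff_getElem] at ha
            obtain ⟨j, hj, rfl⟩ := ha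
            simp only [List.length_set] at hj
            rw [List.getElem_set]
            split_ifs
            · exact ⟨hix, hxq⟩
            · exact hbounds _ (List.getElem_mem hj)
        · exact hT
      have hlen' : (if (((T.getD i []).takeWhile (· ≤ x)).length = 0 ∨
              (T.getD i []).getD (((T.getD i []).takeWhile (· ≤ x)).length - 1) 0 < x) ∧
            (i = 0 ∨ (T.getD (i - 1) []).getD ((T.getD i []).takeWhile (· ≤ x)).length 0 < x)
          then setRow T i ((T.getD i []).set ((T.getD i []).takeWhile (· ≤ x)).length x)
          else T).length = T.length := by
        split_ifs
        · rw [setRow_length, if_pos hiT']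
        · rfl
      apply ih
      · exact hTab'
      · omega
      · omega
      · rw [hy]
        exact hyq.2

end PartA2b
section PartA2c

lemma cascade_step {q f v r : ℕ} {T : List (List ℕ)}
    (hrow : T.getD r [] = List.range' (r + 1) (q - r))
    (hrv : r < v) (hvq : v ≤ q) :
    heckeAux (f + 1) v T r = if v = q then T else heckeAux f (v + 1) T (r + 1) := by
  have hqr : 1 ≤ q - r := by omega
  have hlenR : (T.getD r []).length = q - r := by rw [hrow]; simp
  have hgetD : ∀ j, j < q - r → (T.getD r []).getD j 0 = r + 1 + j := by
    intro j hj
    rw [hrow, List.getD_eq_getElem _ _ (by simpa using hj), List.getElem_range']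
    omega
  have hqmem : q ∈ T.getD r [] := by
    rw [hrow, List.mem_range'_1]
    omega
  by_cases hviq : v = q
  · subst hviq
    have hall : (T.getD r []).all (· ≤ v) := by
      rw [List.all_eq_true]
      intro a ha
      rw [hrow, List.mem_range'_1] at ha
      simp only [decide_eq_true_eq]
      omega
    rw [heckeAux_noop hall (fun hcc => hcc.1 hqmem), if_pos rfl]
  · rw [if_neg hviq]
    have hvq' : v < q := by omega
    have hnall : ¬ (T.getD r []).all (· ≤ v) := by
      rw [List.all_eq_true]
      push_neg
      exact ⟨q, hqmem, by simp; omega⟩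
    rw [heckeAux_bump hnall]
    have hple : ((T.getD r []).takeWhile (· ≤ v)).length ≤ q - r := by
      rw [← hlenR]; exact length_takeWhile_le' _ _
    have hpj : ∀ j (hj : j < ((T.getD r []).takeWhile (· ≤ v)).length),
        (T.getD r []).getD j 0 ≤ v := by
      intro j hj
      have h1 := takeWhile_getElem_pred (P := fun a => a ≤ v) hj
      simp only [decide_eq_true_eq] at h1
      rw [List.getD_eq_getElem _ _ (lt_of_lt_of_le hj (length_takeWhile_le' _ _))]
      exact h1
    have hpv : ((T.getD r []).takeWhile (· ≤ v)).length = v - r := by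
      rcases Nat.lt_or_ge ((T.getD r []).takeWhile (· ≤ v)).length (q - r) with h' | h'
      · have hb := takeWhile_boundary (P := fun a => a ≤ v) (l := T.getD r []) (by omega)
        have h2 : (T.getD r []).getD ((T.getD r []).takeWhile (· ≤ v)).length 0 =
            (T.getD r [])[((T.getD r []).takeWhile (· ≤ v)).length]'(by omega) :=
          List.getD_eq_getElem _ _ (by omega)
        have h3 := hgetD ((T.getD r []).takeWhile (· ≤ v)).length h'
        rw [h2] at h3
        have h4 : ¬ ((T.getD r [])[((T.getD r []).takeWhile (· ≤ v)).length]'(by omega) ≤ v) := by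
          simpa using hb
        -- lower bound on p ; upper bound
        by_cases hp0 : ((T.getD r []).takeWhile (· ≤ v)).length = 0
        · omega
        · have h5 := hpj (((T.getD r []).takeWhile (· ≤ v)).length - 1) (by omega)
          rw [hgetD _ (by omega)] at h5
          omega
      · exfalso
        have heq : ((T.getD r []).takeWhile (· ≤ v)).length = q - r := by omega
        have h5 := hpj (q - r - 1) (by omega)
        rw [hgetD _ (by omega)] at h5
        omega
    have hyval : (T.getD r []).getD ((T.getD r []).takeWhile (· ≤ v)).length 0 = v + 1 := by
      rw [hpv, hgetD _ (by omega)]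
      omega
    have hcond : ¬ ((((T.getD r []).takeWhile (· ≤ v)).length = 0 ∨
        (T.getD r []).getD (((T.getD r []).takeWhile (· ≤ v)).length - 1) 0 < v) ∧
        (r = 0 ∨ (T.getD (r - 1) []).getD ((T.getD r []).takeWhile (· ≤ v)).length 0 < v)) := by
      rintro ⟨h1 | h1, -⟩
      · omega
      · rw [hpv, hgetD _ (by omega)] at h1
        omega
    rw [if_neg hcond, hyval]

lemma cascade {q k : ℕ} : ∀ (j r v f : ℕ) (T : List (List ℕ)), rowsFull q k T →
    r + j = k → r < v → v ≤ q → j ≤ f →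
    heckeAux (f + 1) v T r =
      if q < v + j then T else heckeAux (f - j + 1) (v + j) T k := by
  intro j
  induction j with
  | zero =>
    intro r v f T _ hrk hrv hvq _
    rw [if_neg (by omega)]
    simp only [Nat.sub_zero, Nat.add_zero]
    rw [← hrk]
    rfl
  | succ j ih =>
    intro r v f T hfull hrk hrv hvq hjf
    have hrfull : T.getD r [] = List.range' (r + 1) (q - r) := hfull r (by omega)
    rw [cascade_step hrfull hrv hvq]
    by_cases hv : v = q
    · rw [if_pos hv, if_pos (by omega)]
    · rw [if_neg hv]
      have hres := ih (r + 1) (v + 1) (f - 1) T hfull (by omega) (by omega) (by omega)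
        (by omega)
      rw [show f - 1 + 1 = f by omega] at hres
      rw [hres]
      have e1 : v + 1 + j = v + (j + 1) := by omega
      have e2 : f - 1 - j + 1 = f - (j + 1) + 1 := by omega
      rw [e1, e2]

end PartA2c
section PartA2d

lemma pref_length {R : List ℕ} {c t : ℕ} (h : R.take t = List.range' c t) :
    t ≤ R.length := by
  have hlen := congrArg List.length h
  simp only [List.length_take, List.length_range'] at hlen
  omega

lemma pref_get {R : List ℕ} {c t : ℕ} (h : R.take t = List.range' c t) {j : ℕ}
    (hj : j < t) : R[j]'(lt_of_lt_of_le hj (pref_length h)) = c + j := by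
  have hj' : j < (R.take t).length := by
    simp only [List.length_take]
    have := pref_length h
    omega
  have h1 : (R.take t)[j]'hj' = R[j]'(lt_of_lt_of_le hj (pref_length h)) :=
    List.getElem_take
  have h2 := List.getElem_of_eq h hj'
  rw [h1] at h2
  rw [h2, List.getElem_range']
  omega

lemma pref_build {R : List ℕ} {c t : ℕ} (hlen : t ≤ R.length)
    (h : ∀ j (hj : j < t), R[j]'(by omega) = c + j) : R.take t = List.range' c t := by
  apply List.ext_getElem
  · simp only [List.length_take, List.length_range']
    omega
  · intro j h1 h2
    rw [List.getElem_take, List.getElem_range']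
    have h3 : j < t := by simp only [List.length_take] at h1; omega
    have := h j h3
    omega

lemma pref_lb {R : List ℕ} {k t : ℕ} (hs : R.Pairwise (· < ·)) (hb : ∀ a ∈ R, k < a)
    (hpref : R.take t = List.range' (k + 1) t) (ht : t < R.length) :
    k + t < R[t] := by
  rcases Nat.eq_zero_or_pos t with rfl | hpos
  · simpa using hb _ (List.getElem_mem ht)
  · have h1 : R[t - 1]'(by omega) = k + 1 + (t - 1) := pref_get hpref (by omega)
    have h2 : R[t - 1]'(by omega) < R[t] := sorted_getElem_lt hs (by omega) ht
    omega

lemma pref_succ_of_mem {R : List ℕ} {k t v : ℕ} (hs : R.Pairwise (· < ·))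
    (hb : ∀ a ∈ R, k < a) (hv : v ∈ R) (hvt : v = k + t + 1)
    (hpref : R.take t = List.range' (k + 1) t) :
    R.take (t + 1) = List.range' (k + 1) (t + 1) := by
  obtain ⟨j, hj, hjv⟩ := List.mem_iff_getElem.mp hv
  have htj : t ≤ j := by
    by_contra hc
    push_neg at hc
    have := pref_get hpref hc
    omega
  have ht : t < R.length := by omega
  have h1 : k + t < R[t] := pref_lb hs hb hpref ht
  have h2 : R[t] ≤ R[j] := sorted_getElem_le hs htj hj
  apply pref_build (by omega)
  intro j' hj'
  rcases Nat.lt_or_ge j' t with h' | h'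
  · exact pref_get hpref h'
  · have hjt : j' = t := by omega
    subst hjt
    omega

lemma rowk_facts {q k v f : ℕ} {T : List (List ℕ)} (hT : Tab q T)
    (hfull : rowsFull q k T) (hkq : k ≤ q) (hkv : k < v) (hvq : v ≤ q) :
    (∀ t, (T.getD k []).take t = List.range' (k + 1) t →
      ((heckeAux (f + 1) v T k).getD k []).take t = List.range' (k + 1) t) ∧
    (∀ t, t < q - k → v = k + t + 1 → (T.getD k []).take t = List.range' (k + 1) t →
      ((heckeAux (f + 1) v T k).getD k []).take (t + 1) = List.range' (k + 1) (t + 1)) := by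
  have hkT : k ≤ T.length := length_le_of_rowsFull hkq hfull
  have hRs : (T.getD k []).Pairwise (· < ·) := by
    rcases Nat.lt_or_ge k T.length with h' | h'
    · exact (hT k h').2.1
    · rw [List.getD_eq_default _ _ h']; exact List.Pairwise.nil
  have hRb : ∀ a ∈ T.getD k [], k < a ∧ a ≤ q := by
    rcases Nat.lt_or_ge k T.length with h' | h'
    · exact (hT k h').2.2
    · rw [List.getD_eq_default _ _ h']; intro a ha; simp at ha
  have haboveD : k ≠ 0 → ∀ j, j ≤ q - k → (T.getD (k - 1) []).getD j 0 = k + j := by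
    intro hk0 j hj
    have h1 := hfull (k - 1) (by omega)
    rw [rowOf_def] at h1
    rw [h1, List.getD_eq_getElem _ _ (by simp; omega), List.getElem_range']
    omega
  have haboveLen : k ≠ 0 → (T.getD (k - 1) []).length = q - k + 1 := by
    intro hk0
    have h1 := hfull (k - 1) (by omega)
    rw [rowOf_def] at h1
    rw [h1, List.length_range']
    omega
  by_cases hall : (T.getD k []).all (· ≤ v)
  · have hallv : ∀ a ∈ T.getD k [], a ≤ v := by
      intro a ha
      have := List.all_eq_true.mp hall a ha
      simpa using this
    by_cases hvR : v ∈ T.getD k []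
    · have hres : heckeAux (f + 1) v T k = T := heckeAux_noop hall (fun hcc => hcc.1 hvR)
      rw [hres]
      exact ⟨fun t h => h, fun t ht hvt hpref =>
        pref_succ_of_mem hRs (fun a ha => (hRb a ha).1) hvR hvt hpref⟩
    · have hRlen : (T.getD k []).length ≤ v - 1 - k := by
        apply sorted_length_le hRs
        intro a ha
        have h1 := (hRb a ha).1
        have h2 := hallv a ha
        have h3 : a ≠ v := fun h => hvR (h ▸ ha)
        omega
      have hcond : v ∉ T.getD k [] ∧ (k = 0 ∨
          ((T.getD k []).length < (T.getD (k - 1) []).length ∧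
          (T.getD (k - 1) []).getD (T.getD k []).length 0 < v)) := by
        refine ⟨hvR, ?_⟩
        rcases Nat.eq_zero_or_pos k with rfl | hk0
        · exact Or.inl rfl
        · right
          constructor
          · rw [haboveLen (by omega)]; omega
          · rw [haboveD (by omega) _ (by omega)]; omega
      have hres : heckeAux (f + 1) v T k = setRow T k (T.getD k [] ++ [v]) :=
        heckeAux_append hall hcond
      have hrow : (setRow T k (T.getD k [] ++ [v])).getD k [] = T.getD k [] ++ [v] := by
        rw [← rowOf_def]
        exact setRow_rowOf_self _ hkT
      rw [hres, hrow]
      constructor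
      · intro t hpref
        rw [List.take_append_of_le_length (pref_length hpref)]
        exact hpref
      · intro t ht hvt hpref
        have hRlen' : (T.getD k []).length = t := le_antisymm (by omega) (pref_length hpref)
        have hReq : T.getD k [] = List.range' (k + 1) t := by
          conv_lhs => rw [← List.take_of_length_le (le_of_eq hRlen')]
          exact hpref
        rw [hReq, List.take_of_length_le (by simp)]
        rw [List.range'_concat]
        have hv' : v = k + 1 + 1 * t := by omega
        rw [hv']
  · -- bumping case
    have hkTlt : k < T.length := nonnil_of_not_all hall
    have hp : ((T.getD k []).takeWhile (· ≤ v)).length < (T.getD k []).length :=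
      takeWhile_lt_of_not_all hall
    have hpj : ∀ j (hj : j < ((T.getD k []).takeWhile (· ≤ v)).length),
        (T.getD k [])[j]'(lt_of_lt_of_le hj (length_takeWhile_le' _ _)) ≤ v := by
      intro j hj
      have h1 := takeWhile_getElem_pred (P := fun a => a ≤ v) hj
      simpa using h1
    have hbv : v < (T.getD k [])[((T.getD k []).takeWhile (· ≤ v)).length] := by
      have hb := takeWhile_boundary (P := fun a => a ≤ v) (l := T.getD k []) hp
      simpa using hb
    have hTk' : ∀ (T' : List (List ℕ)) (y : ℕ), T'.length = T.length →
        (heckeAux f y T' (k + 1)).getD k [] = T'.getD k [] := by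
      intro T' y hlen
      have h1 := heckeAux_take f y (k + 1) T' (by omega)
      have h2 := rowOf_take_eq h1 (by omega : k < k + 1)
      rw [rowOf_def, rowOf_def] at h2
      exact h2
    have hres : (heckeAux (f + 1) v T k).getD k [] =
        (if (((T.getD k []).takeWhile (· ≤ v)).length = 0 ∨
              (T.getD k []).getD (((T.getD k []).takeWhile (· ≤ v)).length - 1) 0 < v) ∧
            (k = 0 ∨ (T.getD (k - 1) []).getD ((T.getD k []).takeWhile (· ≤ v)).length 0 < v)
          then (T.getD k []).set ((T.getD k []).takeWhile (· ≤ v)).length v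
          else T.getD k []) := by
      rw [heckeAux_bump hall]
      split_ifs with hcond
      · rw [hTk' _ _ (by rw [setRow_length, if_pos hkTlt])]
        rw [← rowOf_def]
        exact setRow_rowOf_self _ (le_of_lt hkTlt)
      · exact hTk' _ _ rfl
    -- lower and upper bounds for the bumping position
    have hplb : ∀ t, v ∉ T.getD k [] → (T.getD k []).take t = List.range' (k + 1) t →
        t ≤ ((T.getD k []).takeWhile (· ≤ v)).length := by
      intro t hvnot hpref
      have hvlb : k + t + 1 ≤ v := by
        by_contra hc
        push_neg at hc
        have hj0 : v - k - 1 < t := by omega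
        have := pref_get hpref hj0
        apply hvnot
        have hveq : (T.getD k [])[v - k - 1]'(lt_of_lt_of_le hj0 (pref_length hpref)) = v := by
          omega
        exact hveq ▸ List.getElem_mem _
      by_contra hc
      push_neg at hc
      have h1 := pref_get hpref hc
      omega
    have hpub : ∀ t, v ∉ T.getD k [] → v = k + t + 1 →
        (T.getD k []).take t = List.range' (k + 1) t →
        ((T.getD k []).takeWhile (· ≤ v)).length ≤ t := by
      intro t hvnot hvt hpref
      by_contra hc
      push_neg at hc
      have ht : t < (T.getD k []).length := by omega
      have h1 : (T.getD k [])[t] ≤ v := hpj t hc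
      have h2 : k + t < (T.getD k [])[t] := pref_lb hRs (fun a ha => (hRb a ha).1) hpref ht
      apply hvnot
      have hveq : (T.getD k [])[t] = v := by omega
      exact hveq ▸ List.getElem_mem _
    by_cases hcond : (((T.getD k []).takeWhile (· ≤ v)).length = 0 ∨
          (T.getD k []).getD (((T.getD k []).takeWhile (· ≤ v)).length - 1) 0 < v) ∧
        (k = 0 ∨ (T.getD (k - 1) []).getD ((T.getD k []).takeWhile (· ≤ v)).length 0 < v)
    · rw [if_pos hcond] at hres
      have hvnotR : v ∉ T.getD k [] := by
        intro hvR
        obtain ⟨j, hj, hjv⟩ := List.mem_iff_getElem.mp hvR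
        have hjp : j < ((T.getD k []).takeWhile (· ≤ v)).length := by
          by_contra hc
          push_neg at hc
          have := sorted_getElem_le hRs hc hj
          omega
        have h1 := hpj (((T.getD k []).takeWhile (· ≤ v)).length - 1) (by omega)
        have h2 : (T.getD k [])[j] ≤
            (T.getD k [])[((T.getD k []).takeWhile (· ≤ v)).length - 1]'(by omega) :=
          sorted_getElem_le hRs (by omega) (by omega)
        rcases hcond.1 with h0 | hlt
        · omega
        · rw [List.getD_eq_getElem _ _ (by omega)] at hlt
          omega
      rw [hres]
      constructor
      · intro t hpref
        have hpt := hplb t hvnotR hpref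
        apply pref_build (by rw [List.length_set]; exact pref_length hpref)
        intro j hj
        rw [List.getElem_set, if_neg (by omega)]
        exact pref_get hpref hj
      · intro t ht hvt hpref
        have hpt := hplb t hvnotR hpref
        have hpt2 := hpub t hvnotR hvt hpref
        have hpeq : ((T.getD k []).takeWhile (· ≤ v)).length = t := by omega
        apply pref_build (by rw [List.length_set]; omega)
        intro j hj
        rw [List.getElem_set]
        rcases Nat.lt_or_ge j t with h' | h'
        · rw [if_neg (by omega)]
          exact pref_get hpref h'
        · have hjt : j = t := by omega
          rw [if_pos (by omega)]
          omega
    · rw [if_neg hcond] at hres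
      rw [hres]
      refine ⟨fun t h => h, ?_⟩
      intro t ht hvt hpref
      by_cases hvR : v ∈ T.getD k []
      · exact pref_succ_of_mem hRs (fun a ha => (hRb a ha).1) hvR hvt hpref
      · exfalso
        apply hcond
        have hpt := hplb t hvR hpref
        have hpt2 := hpub t hvR hvt hpref
        have hpeq : ((T.getD k []).takeWhile (· ≤ v)).length = t := by omega
        constructor
        · rcases Nat.eq_zero_or_pos t with rfl | hpos
          · exact Or.inl hpeq
          · right
            rw [List.getD_eq_getElem _ _ (by omega)]
            simp only [hpeq]
            have := pref_get hpref (show t - 1 < t by omega)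
            omega
        · rcases Nat.eq_zero_or_pos k with rfl | hk0
          · exact Or.inl rfl
          · right
            rw [haboveD (by omega) _ (by omega), hpeq]
            omega

end PartA2d
section PartA2e

lemma insert_facts {q k x : ℕ} {T : List (List ℕ)} (hT : Tab q T) (hfull : rowsFull q k T)
    (hkq : k ≤ q) (hx1 : 1 ≤ x) (hxq : x ≤ q) :
    Tab q (heckeInsert T x) ∧ rowsFull q k (heckeInsert T x) ∧
    (∀ t, (T.getD k []).take t = List.range' (k + 1) t →
      ((heckeInsert T x).getD k []).take t = List.range' (k + 1) t) ∧
    (∀ t, t < q - k → x = t + 1 → (T.getD k []).take t = List.range' (k + 1) t →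
      ((heckeInsert T x).getD k []).take (t + 1) = List.range' (k + 1) (t + 1)) := by
  have hkT : k ≤ T.length := length_le_of_rowsFull hkq hfull
  have hcas : heckeInsert T x = if q < x + k then T
      else heckeAux (T.length - k + 1) (x + k) T k := by
    show heckeAux (T.length + 1) x T 0 = _
    exact cascade k 0 x T.length T hfull (by omega) (by omega) hxq (by omega)
  by_cases habs : q < x + k
  · rw [hcas, if_pos habs]
    refine ⟨hT, hfull, fun t h => h, ?_⟩
    intro t ht hxt hpref
    exfalso
    omega
  · rw [hcas, if_neg habs]
    push_neg at habs
    have h1 : Tab q (heckeAux (T.length - k + 1) (x + k) T k) :=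
      heckeAux_tab (T.length - k + 1) (x + k) k T hT hkT (by omega) habs
    have h2 : rowsFull q k (heckeAux (T.length - k + 1) (x + k) T k) := by
      intro r hr
      have := rowOf_take_eq (heckeAux_take (T.length - k + 1) (x + k) k T hkT) hr
      rw [this]
      exact hfull r hr
    have h3 := rowk_facts (f := T.length - k) (v := x + k) hT hfull hkq (by omega) habs
    exact ⟨h1, h2, h3.1, fun t ht hxt hpref => h3.2 t ht (by omega) hpref⟩

/-- A block of letters: all in `{1,…,q}` and containing every letter. -/
def goodBlock (q : ℕ) (b : List ℕ) : Prop :=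
  (∀ a ∈ b, 1 ≤ a ∧ a ≤ q) ∧ ∀ i, 1 ≤ i → i ≤ q → i ∈ b

lemma blockfold_facts {q k : ℕ} : ∀ (b : List ℕ) (T : List (List ℕ)) (t : ℕ),
    Tab q T → rowsFull q k T → k ≤ q → t ≤ q - k →
    (T.getD k []).take t = List.range' (k + 1) t → (∀ a ∈ b, 1 ≤ a ∧ a ≤ q) →
    ∃ t', t ≤ t' ∧ t' ≤ q - k ∧ Tab q (b.foldl heckeInsert T) ∧
      rowsFull q k (b.foldl heckeInsert T) ∧
      ((b.foldl heckeInsert T).getD k []).take t' = List.range' (k + 1) t' ∧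
      (t + 1 ∈ b → t < q - k → t < t') := by
  intro b
  induction b with
  | nil =>
    intro T t h1 h2 h3 h4 h5 h6
    exact ⟨t, le_rfl, h4, h1, h2, h5, by simp⟩
  | cons a b ih =>
    intro T t h1 h2 h3 h4 h5 h6
    simp only [List.foldl_cons]
    have hx := h6 a (by simp)
    obtain ⟨i1, i2, i3, i4⟩ := insert_facts h1 h2 h3 hx.1 hx.2
    by_cases hca : a = t + 1 ∧ t < q - k
    · obtain ⟨t', ht1, ht2, ht3, ht4, ht5, ht6⟩ := ih (heckeInsert T a) (t + 1) i1 i2 h3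
        (by omega) (i4 t hca.2 hca.1 h5) (fun y hy => h6 y (by simp [hy]))
      exact ⟨t', by omega, ht2, ht3, ht4, ht5, fun _ _ => by omega⟩
    · obtain ⟨t', ht1, ht2, ht3, ht4, ht5, ht6⟩ := ih (heckeInsert T a) t i1 i2 h3
        h4 (i3 t h5) (fun y hy => h6 y (by simp [hy]))
      refine ⟨t', ht1, ht2, ht3, ht4, ht5, ?_⟩
      intro hmem hlt
      apply ht6 ?_ hlt
      rcases List.mem_cons.mp hmem with h | h
      · exfalso; exact hca ⟨h.symm, hlt⟩
      · exact h

lemma promote {q k : ℕ} {T : List (List ℕ)} (hT : Tab q T) (hfull : rowsFull q k T)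
    (hkq : k < q) (hpref : (T.getD k []).take (q - k) = List.range' (k + 1) (q - k)) :
    rowsFull q (k + 1) T := by
  have hlen1 : q - k ≤ (T.getD k []).length := pref_length hpref
  have hkT : k < T.length := by
    by_contra hc
    push_neg at hc
    rw [List.getD_eq_default _ _ hc] at hlen1
    simp at hlen1
    omega
  have hlen2 : (T.getD k []).length ≤ q - k :=
    sorted_length_le (hT k hkT).2.1 (hT k hkT).2.2
  have hloweq : T.getD k [] = List.range' (k + 1) (q - k) := by
    conv_lhs => rw [← List.take_of_length_le hlen2]
    exact hpref
  intro r hr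
  rcases Nat.lt_or_ge r k with h | h
  · exact hfull r h
  · have hrk : r = k := by omega
    subst hrk
    rw [rowOf_def]
    exact hloweq

/-- Number of boxes below the staircase accounted for by `k` full rows plus `t`
cells in row `k`. -/
def Dval (q k t : ℕ) : ℕ := t + (Finset.range k).sum (fun r => q - r)

lemma Dval_succ (q k : ℕ) : Dval q (k + 1) 0 = Dval q k (q - k) := by
  unfold Dval
  rw [Finset.sum_range_succ]
  omega

lemma Dval_mono (q : ℕ) {k k' : ℕ} (h : k ≤ k') : Dval q k 0 ≤ Dval q k' 0 := by
  unfold Dval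
  simp only [zero_add]
  exact Finset.sum_le_sum_of_subset (Finset.range_subset_range.mpr h)

lemma normalizeTab {q : ℕ} : ∀ (d k t : ℕ) (T : List (List ℕ)), q - k ≤ d → Tab q T →
    rowsFull q k T → k ≤ q → t ≤ q - k →
    (T.getD k []).take t = List.range' (k + 1) t →
    ∃ k' t', rowsFull q k' T ∧ k' ≤ q ∧ t' ≤ q - k' ∧
      (T.getD k' []).take t' = List.range' (k' + 1) t' ∧
      Dval q k' t' = Dval q k t ∧ (t' < q - k' ∨ k' = q) := by
  intro d
  induction d with
  | zero =>
    intro k t T hd hT hfull hkq ht hpref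
    have hkq' : k = q := by omega
    exact ⟨k, t, hfull, hkq, ht, hpref, rfl, Or.inr hkq'⟩
  | succ d ih =>
    intro k t T hd hT hfull hkq ht hpref
    rcases eq_or_lt_of_le hkq with rfl | hkq'
    · exact ⟨k, t, hfull, le_rfl, ht, hpref, rfl, Or.inr rfl⟩
    · rcases Nat.lt_or_ge t (q - k) with h | h
      · exact ⟨k, t, hfull, hkq, ht, hpref, rfl, Or.inl h⟩
      · have hteq : t = q - k := by omega
        subst hteq
        have hfull' := promote hT hfull hkq' hpref
        obtain ⟨k', t', a2, a3, a4, a5, a6, a7⟩ := ih (k + 1) 0 T (by omega) hT hfull'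
          (by omega) (by omega) (by simp)
        exact ⟨k', t', a2, a3, a4, a5, by rw [a6, Dval_succ], a7⟩

lemma fill {q : ℕ} : ∀ (bs : List (List ℕ)) (k t : ℕ) (T : List (List ℕ)), Tab q T →
    rowsFull q k T → k ≤ q → t ≤ q - k →
    (T.getD k []).take t = List.range' (k + 1) t →
    (∀ b ∈ bs, goodBlock q b) → Dval q q 0 ≤ Dval q k t + bs.length →
    Tab q (bs.foldl (fun T b => b.foldl heckeInsert T) T) ∧
      rowsFull q q (bs.foldl (fun T b => b.foldl heckeInsert T) T) := by
  intro bs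
  induction bs with
  | nil =>
    intro k t T hT hfull hkq ht hpref hbs hD
    simp only [List.foldl_nil]
    simp only [List.length_nil, Nat.add_zero] at hD
    obtain ⟨k', t', a2, a3, a4, a5, a6, a7⟩ :=
      normalizeTab (q - k) k t T le_rfl hT hfull hkq ht hpref
    rcases a7 with h | heq
    · exfalso
      have h1 : Dval q k' t' < Dval q k' (q - k') := by unfold Dval; omega
      have h2 : Dval q k' (q - k') = Dval q (k' + 1) 0 := (Dval_succ q k').symm
      have h3 : Dval q (k' + 1) 0 ≤ Dval q q 0 := Dval_mono q (by omega)
      omega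
    · exact ⟨hT, heq ▸ a2⟩
  | cons b bs ih =>
    intro k t T hT hfull hkq ht hpref hbs hD
    simp only [List.foldl_cons]
    obtain ⟨k', t', a2, a3, a4, a5, a6, a7⟩ :=
      normalizeTab (q - k) k t T le_rfl hT hfull hkq ht hpref
    simp only [List.length_cons] at hD
    rcases a7 with hlt | heq
    · have hgood := hbs b (by simp)
      obtain ⟨t'', b1, b2, b3, b4, b5, b6⟩ := blockfold_facts b T t' hT a2 a3 a4 a5 hgood.1
      have hmem : t' + 1 ∈ b := hgood.2 (t' + 1) (by omega) (by omega)
      have hinc := b6 hmem hlt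
      apply ih k' t'' _ b3 b4 a3 b2 b5 (fun c hc => hbs c (by simp [hc]))
      have e1 : Dval q k' t'' = Dval q k' t' + (t'' - t') := by unfold Dval; omega
      omega
    · have a2' : rowsFull q q T := heq ▸ a2
      have ht0 : t' = 0 := by omega
      subst ht0
      obtain ⟨t'', b1, b2, b3, b4, b5, b6⟩ := blockfold_facts b T 0 hT a2' le_rfl
        (by omega) (by simp) (hbs b (by simp)).1
      have ht0' : t'' = 0 := by omega
      subst ht0'
      apply ih q 0 _ b3 b4 le_rfl (by omega) b5 (fun c hc => hbs c (by simp [hc]))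
      omega

lemma full_absorb {q : ℕ} : ∀ (l : List ℕ) (T : List (List ℕ)), Tab q T → rowsFull q q T →
    (∀ a ∈ l, 1 ≤ a ∧ a ≤ q) →
    Tab q (l.foldl heckeInsert T) ∧ rowsFull q q (l.foldl heckeInsert T) := by
  intro l
  induction l with
  | nil => exact fun T h1 h2 _ => ⟨h1, h2⟩
  | cons a l ih =>
    intro T h1 h2 h3
    simp only [List.foldl_cons]
    obtain ⟨i1, i2, -, -⟩ := insert_facts h1 h2 le_rfl (h3 a (by simp)).1 (h3 a (by simp)).2
    exact ih _ i1 i2 (fun y hy => h3 y (by simp [hy]))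

lemma shape_of_full {q : ℕ} {T : List (List ℕ)} (hT : Tab q T) (hfull : rowsFull q q T) :
    T.map List.length = staircase q := by
  have hlen1 : q ≤ T.length := length_le_of_rowsFull le_rfl hfull
  have hlen2 : T.length ≤ q := by
    by_contra hc
    push_neg at hc
    obtain ⟨hne, -, hb⟩ := hT q hc
    obtain ⟨a, ha⟩ := List.exists_mem_of_ne_nil _ hne
    have := hb a ha
    omega
  have hlen : T.length = q := le_antisymm hlen2 hlen1
  apply List.ext_getElem
  · simp [staircase, hlen]
  · intro r h1 h2
    simp only [List.length_map, hlen] at h1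
    have hrow := hfull r h1
    rw [rowOf_def, List.getD_eq_getElem _ _ (by omega)] at hrow
    simp only [List.getElem_map, staircase, List.getElem_range]
    rw [hrow]
    simp

lemma heckeShape_staircase {q : ℕ} (bs : List (List ℕ)) (rest : List ℕ)
    (hbs : ∀ b ∈ bs, goodBlock q b) (hrest : ∀ a ∈ rest, 1 ≤ a ∧ a ≤ q)
    (hlen : q * q ≤ bs.length) :
    heckeShape (bs.flatten ++ rest) = staircase q := by
  unfold heckeShape heckeP
  rw [List.foldl_append, List.foldl_flatten]
  have hDq : Dval q q 0 ≤ q * q := by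
    unfold Dval
    simp only [zero_add]
    calc (Finset.range q).sum (fun r => q - r) ≤ (Finset.range q).sum (fun _ => q) :=
          Finset.sum_le_sum (fun i _ => by omega)
      _ = q * q := by simp [Finset.sum_const, Finset.card_range, Nat.mul_comm]
  have h0 : Tab q ([] : List (List ℕ)) := fun r hr => by simp at hr
  have hfull0 : rowsFull q 0 [] := fun r hr => by omega
  obtain ⟨f1, f2⟩ := fill bs 0 0 [] h0 hfull0 (by omega) (by omega) (by simp)
    hbs (by
      have h1 : Dval q 0 0 = 0 := by simp [Dval]
      omega)
  obtain ⟨g1, g2⟩ := full_absorb rest _ f1 f2 hrest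
  exact shape_of_full g1 g2

end PartA2e
section PartA3

/-- The good event: each of the `(q+1)^2` consecutive blocks of length
`n / (q+1)^2` contains every letter. -/
def goodWord (n q : ℕ) (w : Fin n → Fin q) : Prop :=
  ∀ j, j < (q + 1) ^ 2 → ∀ a : Fin q, ∃ p, p < n / (q + 1) ^ 2 ∧
    ∃ (h : j * (n / (q + 1) ^ 2) + p < n), w ⟨j * (n / (q + 1) ^ 2) + p, h⟩ = a

lemma flatten_chunks {α : Type*} (l : List α) (B : ℕ) : ∀ m,
    ((List.range m).map (fun j => (l.drop (j * B)).take B)).flatten ++ l.drop (m * B) = l := by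
  intro m
  induction m with
  | zero => simp
  | succ m ih =>
    rw [List.range_succ, List.map_append, List.flatten_append]
    simp only [List.map_cons, List.map_nil, List.flatten_cons, List.flatten_nil,
      List.append_nil]
    rw [List.append_assoc]
    have h2 : l.drop ((m + 1) * B) = (l.drop (m * B)).drop B := by
      rw [List.drop_drop]
      congr 1
      ring
    rw [h2, List.take_append_drop, ih]

lemma goodWord_det {n q : ℕ} (hq : 1 ≤ q) {w : Fin n → Fin q} (hw : goodWord n q w) :
    heckeW q (toWord w) = Fin.revPerm ∧ heckeShape (toWord w) = staircase q := by
  unfold goodWord at hw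
  set B := n / (q + 1) ^ 2 with hB
  set bs := (List.range ((q + 1) ^ 2)).map (fun j => ((toWord w).drop (j * B)).take B)
    with hbs
  have hsplit : bs.flatten ++ (toWord w).drop ((q + 1) ^ 2 * B) = toWord w :=
    flatten_chunks _ _ _
  have htwlen : (toWord w).length = n := by simp [toWord]
  have hmemtw : ∀ a ∈ toWord w, 1 ≤ a ∧ a ≤ q := by
    intro a ha
    rw [toWord, List.mem_ofFn] at ha
    obtain ⟨i, rfl⟩ := ha
    have := (w i).isLt
    show 1 ≤ (w i : ℕ) + 1 ∧ (w i : ℕ) + 1 ≤ q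
    omega
  have hbslen : bs.length = (q + 1) ^ 2 := by
    rw [hbs]
    simp
  have hgood : ∀ b ∈ bs, goodBlock q b := by
    intro b hb
    rw [hbs, List.mem_map] at hb
    obtain ⟨j, hj, rfl⟩ := hb
    rw [List.mem_range] at hj
    constructor
    · intro a ha
      exact hmemtw a (List.mem_of_mem_drop (List.mem_of_mem_take ha))
    · intro i hi1 hiq
      obtain ⟨p, hp, hlt, hwp⟩ := hw j hj ⟨i - 1, by omega⟩
      have hplen : p < (((toWord w).drop (j * B)).take B).length := by
        simp only [List.length_take, List.length_drop, htwlen]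
        omega
      have hval : (((toWord w).drop (j * B)).take B)[p] = i := by
        rw [List.getElem_take, List.getElem_drop]
        simp only [toWord, List.getElem_ofFn]
        rw [hwp]
        show i - 1 + 1 = i
        omega
      exact hval ▸ List.getElem_mem hplen
  have hrest : ∀ a ∈ (toWord w).drop ((q + 1) ^ 2 * B), 1 ≤ a ∧ a ≤ q :=
    fun a ha => hmemtw a (List.mem_of_mem_drop ha)
  constructor
  · rw [← hsplit]
    exact heckeW_eq_revPerm bs _ (fun b hb i h1 h2 => (hgood b hb).2 i h1 h2)
      (by rw [hbslen]; exact Mpairs_lt q)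
  · rw [← hsplit]
    exact heckeShape_staircase bs _ hgood hrest
      (by rw [hbslen]; nlinarith)

end PartA3
section PartB

lemma card_avoid {n q : ℕ} (j B : ℕ) (hq : 1 ≤ q) (hjB : j * B + B ≤ n) (a : Fin q) :
    (Finset.univ.filter (fun w : Fin n → Fin q =>
      ∀ p, p < B → ∀ (h : j * B + p < n), w ⟨j * B + p, h⟩ ≠ a)).card
      = (q - 1) ^ B * q ^ (n - B) := by
  classical
  have hset : Finset.univ.filter (fun w : Fin n → Fin q =>
      ∀ p, p < B → ∀ (h : j * B + p < n), w ⟨j * B + p, h⟩ ≠ a) =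
      Fintype.piFinset (fun i : Fin n =>
        if j * B ≤ (i : ℕ) ∧ (i : ℕ) < j * B + B then Finset.univ.erase a
        else Finset.univ) := by
    ext w
    simp only [Finset.mem_filter, Finset.mem_univ, true_and, Fintype.mem_piFinset]
    constructor
    · intro hw i
      split_ifs with hi
      · rw [Finset.mem_erase]
        refine ⟨?_, Finset.mem_univ _⟩
        have h1 := hw ((i : ℕ) - j * B) (by omega) (by omega)
        have hidx : (⟨j * B + ((i : ℕ) - j * B), by omega⟩ : Fin n) = i :=
          Fin.ext (by simp; omega)
        rwa [hidx] at h1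
      · exact Finset.mem_univ _
    · intro hw p hp h
      have h1 := hw ⟨j * B + p, h⟩
      rw [if_pos (by simp; omega)] at h1
      exact (Finset.mem_erase.mp h1).1
  rw [hset, Fintype.card_piFinset]
  have hcards : ∀ i : Fin n, (if j * B ≤ (i : ℕ) ∧ (i : ℕ) < j * B + B
      then Finset.univ.erase a else (Finset.univ : Finset (Fin q))).card =
      if j * B ≤ (i : ℕ) ∧ (i : ℕ) < j * B + B then q - 1 else q := by
    intro i
    split_ifs
    · rw [Finset.card_erase_of_mem (Finset.mem_univ _), Finset.card_univ, Fintype.card_fin]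
    · rw [Finset.card_univ, Fintype.card_fin]
  rw [Finset.prod_congr rfl (fun i _ => hcards i), Finset.prod_ite, Finset.prod_const,
    Finset.prod_const]
  have hcard1 : (Finset.univ.filter
      (fun i : Fin n => j * B ≤ (i : ℕ) ∧ (i : ℕ) < j * B + B)).card = B := by
    have himg : (Finset.univ.filter
        (fun i : Fin n => j * B ≤ (i : ℕ) ∧ (i : ℕ) < j * B + B)).image Fin.val =
        Finset.Ico (j * B) (j * B + B) := by
      ext m
      simp only [Finset.mem_image, Finset.mem_filter, Finset.mem_univ, true_and,
        Finset.mem_Ico]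
      constructor
      · rintro ⟨i, hi, rfl⟩; exact hi
      · intro hm
        exact ⟨⟨m, by omega⟩, by simpa using hm, rfl⟩
    have := congrArg Finset.card himg
    rw [Finset.card_image_of_injective _ Fin.val_injective, Nat.card_Ico] at this
    omega
  have hcard2 : (Finset.univ.filter
      (fun i : Fin n => ¬(j * B ≤ (i : ℕ) ∧ (i : ℕ) < j * B + B))).card = n - B := by
    have hsum := Finset.card_filter_add_card_filter_not
      (s := (Finset.univ : Finset (Fin n)))
      (p := fun i : Fin n => j * B ≤ (i : ℕ) ∧ (i : ℕ) < j * B + B)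
    rw [Finset.card_univ, Fintype.card_fin, hcard1] at hsum
    omega
  rw [hcard1, hcard2]

lemma count_target {n q : ℕ} (hq : 1 ≤ q) (P : (Fin n → Fin q) → Prop) [DecidablePred P]
    (hP : ∀ w, goodWord n q w → P w) :
    q ^ n ≤ (Finset.univ.filter P).card +
      (q + 1) ^ 2 * q * ((q - 1) ^ (n / (q + 1) ^ 2) * q ^ (n - n / (q + 1) ^ 2)) := by
  classical
  have hBle : (q + 1) ^ 2 * (n / (q + 1) ^ 2) ≤ n := Nat.mul_div_le n ((q + 1) ^ 2)
  have hsub : Finset.univ.filter (fun w : Fin n → Fin q => ¬ P w) ⊆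
      (Finset.range ((q + 1) ^ 2)).biUnion (fun j => Finset.univ.biUnion (fun a : Fin q =>
        Finset.univ.filter (fun w : Fin n → Fin q =>
          ∀ p, p < n / (q + 1) ^ 2 → ∀ (h : j * (n / (q + 1) ^ 2) + p < n),
            w ⟨j * (n / (q + 1) ^ 2) + p, h⟩ ≠ a))) := by
    intro w hw
    simp only [Finset.mem_filter, Finset.mem_univ, true_and] at hw
    have hng : ¬ goodWord n q w := fun hg => hw (hP w hg)
    unfold goodWord at hng
    push_neg at hng
    obtain ⟨j, hj, a, ha⟩ := hng
    simp only [Finset.mem_biUnion, Finset.mem_range, Finset.mem_univ, Finset.mem_filter,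
      true_and]
    exact ⟨j, hj, a, fun p hp h => ha p hp h⟩
  have hbad : (Finset.univ.filter (fun w : Fin n → Fin q => ¬ P w)).card ≤
      (q + 1) ^ 2 * q * ((q - 1) ^ (n / (q + 1) ^ 2) * q ^ (n - n / (q + 1) ^ 2)) := by
    calc (Finset.univ.filter (fun w : Fin n → Fin q => ¬ P w)).card
        ≤ ((Finset.range ((q + 1) ^ 2)).biUnion (fun j => Finset.univ.biUnion
          (fun a : Fin q => Finset.univ.filter (fun w : Fin n → Fin q =>
          ∀ p, p < n / (q + 1) ^ 2 → ∀ (h : j * (n / (q + 1) ^ 2) + p < n),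
            w ⟨j * (n / (q + 1) ^ 2) + p, h⟩ ≠ a)))).card :=
          Finset.card_le_card hsub
      _ ≤ ∑ j ∈ Finset.range ((q + 1) ^ 2), (Finset.univ.biUnion
          (fun a : Fin q => Finset.univ.filter (fun w : Fin n → Fin q =>
          ∀ p, p < n / (q + 1) ^ 2 → ∀ (h : j * (n / (q + 1) ^ 2) + p < n),
            w ⟨j * (n / (q + 1) ^ 2) + p, h⟩ ≠ a))).card :=
          Finset.card_biUnion_le
      _ ≤ ∑ j ∈ Finset.range ((q + 1) ^ 2), ∑ a : Fin q,
          (Finset.univ.filter (fun w : Fin n → Fin q =>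
          ∀ p, p < n / (q + 1) ^ 2 → ∀ (h : j * (n / (q + 1) ^ 2) + p < n),
            w ⟨j * (n / (q + 1) ^ 2) + p, h⟩ ≠ a)).card :=
          Finset.sum_le_sum (fun j _ => Finset.card_biUnion_le)
      _ = ∑ j ∈ Finset.range ((q + 1) ^ 2), ∑ _a : Fin q,
          ((q - 1) ^ (n / (q + 1) ^ 2) * q ^ (n - n / (q + 1) ^ 2)) := by
          apply Finset.sum_congr rfl
          intro j hj
          apply Finset.sum_congr rfl
          intro a _
          apply card_avoid j (n / (q + 1) ^ 2) hq
          rw [Finset.mem_range] at hj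
          have h1 : (j + 1) * (n / (q + 1) ^ 2) ≤ (q + 1) ^ 2 * (n / (q + 1) ^ 2) :=
            Nat.mul_le_mul_right _ (by omega)
          have h2 : j * (n / (q + 1) ^ 2) + n / (q + 1) ^ 2 = (j + 1) * (n / (q + 1) ^ 2) := by
            ring
          omega
      _ = (q + 1) ^ 2 * q * ((q - 1) ^ (n / (q + 1) ^ 2) * q ^ (n - n / (q + 1) ^ 2)) := by
          simp only [Finset.sum_const, Finset.card_range, Finset.card_univ, Fintype.card_fin,
            smul_eq_mul]
          ring
  have htotal : (Finset.univ.filter P).card +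
      (Finset.univ.filter (fun w : Fin n → Fin q => ¬ P w)).card = q ^ n := by
    rw [Finset.card_filter_add_card_filter_not, Finset.card_univ]
    simp [Fintype.card_fun]
  omega

end PartB
section PartC

set_option maxHeartbeats 1000000

/-- The error bound controlling the probability of the bad event. -/
noncomputable def epsSeq (q : ℕ → ℕ) (n : ℕ) : ℝ :=
  ((q n : ℝ) + 1) ^ 2 * q n * (((q n : ℝ) - 1) / q n) ^ (n / (q n + 1) ^ 2)

lemma count_target' {n q : ℕ} (hq : 1 ≤ q) (S : Finset (Fin n → Fin q))
    (hS : ∀ w, goodWord n q w → w ∈ S) :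
    q ^ n ≤ S.card +
      (q + 1) ^ 2 * q * ((q - 1) ^ (n / (q + 1) ^ 2) * q ^ (n - n / (q + 1) ^ 2)) := by
  classical
  have h := count_target hq (fun w => w ∈ S) hS
  rwa [Finset.filter_mem_eq_inter, Finset.univ_inter] at h

lemma epsSeq_tendsto {α : ℝ} (hα0 : 0 < α) (hα : α < 1 / 3) (q : ℕ → ℕ) {c₁ c₂ : ℝ}
    (hc₁ : 0 < c₁)
    (hq : ∀ᶠ n : ℕ in atTop, c₁ * (n : ℝ) ^ α ≤ (q n : ℝ) ∧ (q n : ℝ) ≤ c₂ * (n : ℝ) ^ α) :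
    Tendsto (epsSeq q) atTop (nhds 0) := by
  have hc₃1 : (1 : ℝ) ≤ max c₂ 1 := le_max_right _ _
  have hc₂₃ : c₂ ≤ max c₂ 1 := le_max_left _ _
  set c₃ := max c₂ 1 with hc₃def
  set δ := (1 - 3 * α) / 2 with hδdef
  have hδ : 0 < δ := by rw [hδdef]; linarith
  have hbase : Tendsto (fun n : ℕ => c₁ * (n : ℝ) ^ α) atTop atTop :=
    (Tendsto.const_mul_atTop hc₁ (tendsto_rpow_atTop hα0)).comp tendsto_natCast_atTop_atTop
  have hqtop : Tendsto (fun n : ℕ => (q n : ℝ)) atTop atTop := by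
    apply tendsto_atTop_mono' atTop ?_ hbase
    filter_upwards [hq] with n hn
    exact hn.1
  have hutop : Tendsto (fun n : ℕ => (n : ℝ) ^ δ) atTop atTop :=
    (tendsto_rpow_atTop hδ).comp tendsto_natCast_atTop_atTop
  set U0 : ℝ := 8 * c₃ ^ 3 * (3 * Real.log (2 * c₃) + 3 * α / δ + 1) with hU0
  have hlogc₃ : 0 ≤ Real.log (2 * c₃) := Real.log_nonneg (by linarith)
  have hmain : ∀ᶠ n : ℕ in atTop, epsSeq q n ≤ Real.exp (-((n : ℝ) ^ δ)) := by
    filter_upwards [hq, hqtop.eventually_ge_atTop 2, eventually_ge_atTop 1,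
      hutop.eventually_ge_atTop (max U0 1),
      (((tendsto_rpow_atTop (show (0 : ℝ) < 1 - 2 * α by linarith)).comp
        tendsto_natCast_atTop_atTop).eventually_ge_atTop (8 * c₃ ^ 2))]
      with n hqn hq2 hn1 hu hbig
    simp only [Function.comp] at hbig
    have hnR : (1 : ℝ) ≤ (n : ℝ) := by exact_mod_cast hn1
    have hnpos : (0 : ℝ) < (n : ℝ) := by linarith
    have hnα : (1 : ℝ) ≤ (n : ℝ) ^ α := by
      calc (1 : ℝ) = (1 : ℝ) ^ α := (Real.one_rpow α).symm
        _ ≤ (n : ℝ) ^ α := Real.rpow_le_rpow (by norm_num) hnR hα0.le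
    have hQ1 : (1 : ℝ) ≤ (q n : ℝ) := by linarith
    have hQpos : (0 : ℝ) < (q n : ℝ) := by linarith
    have hA0 : (0 : ℝ) ≤ (n : ℝ) ^ α := by positivity
    have hcA : c₂ * (n : ℝ) ^ α ≤ c₃ * (n : ℝ) ^ α := mul_le_mul_of_nonneg_right hc₂₃ hA0
    have hA1 : (n : ℝ) ^ α ≤ c₃ * (n : ℝ) ^ α := le_mul_of_one_le_left hA0 hc₃1
    have hq1 : (q n : ℝ) + 1 ≤ 2 * c₃ * (n : ℝ) ^ α := by
      have h1 : (q n : ℝ) ≤ c₃ * (n : ℝ) ^ α := le_trans hqn.2 hcA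
      linarith
    set Q := (q n : ℝ) with hQdef
    set Bn := n / (q n + 1) ^ 2 with hBndef
    set u := (n : ℝ) ^ δ with hudef
    have hu1 : (1 : ℝ) ≤ u := le_trans (le_max_right _ _) hu
    have huU : U0 ≤ u := le_trans (le_max_left _ _) hu
    -- step 1 : epsSeq ≤ exp (3 log (Q+1) - Bn / Q)
    have hstep1 : epsSeq q n ≤ Real.exp (3 * Real.log (Q + 1) - (Bn : ℝ) / Q) := by
      have h1 : ((Q - 1) / Q) ≤ Real.exp (-(1 / Q)) := by
        have h2 := Real.add_one_le_exp (-(1 / Q))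
        have h3 : (Q - 1) / Q = 1 - 1 / Q := by field_simp
        linarith
      have h0 : (0 : ℝ) ≤ (Q - 1) / Q := div_nonneg (by linarith) (by linarith)
      have h4 : ((Q - 1) / Q) ^ Bn ≤ Real.exp (-(1 / Q)) ^ Bn := pow_le_pow_left₀ h0 h1 Bn
      have h5 : Real.exp (-(1 / Q)) ^ Bn = Real.exp (-((Bn : ℝ) / Q)) := by
        rw [← Real.exp_nat_mul]
        congr 1
        field_simp
      have h6 : (Q + 1) ^ 2 * Q ≤ (Q + 1) ^ 3 := by nlinarith
      have h7 : (Q + 1) ^ 3 = Real.exp (3 * Real.log (Q + 1)) := by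
        rw [show (3 : ℝ) * Real.log (Q + 1) = ((3 : ℕ) : ℝ) * Real.log (Q + 1) by norm_num,
          Real.exp_nat_mul, Real.exp_log (by linarith)]
      calc epsSeq q n = (Q + 1) ^ 2 * Q * ((Q - 1) / Q) ^ Bn := rfl
        _ ≤ (Q + 1) ^ 3 * Real.exp (-((Bn : ℝ) / Q)) := by
            rw [← h5]
            apply mul_le_mul h6 h4 (by positivity) (by positivity)
        _ = Real.exp (3 * Real.log (Q + 1) - (Bn : ℝ) / Q) := by
            rw [h7, ← Real.exp_add, sub_eq_add_neg]
    -- step 2 : exponent bound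
    have hlog : Real.log (Q + 1) ≤ Real.log (2 * c₃) + α * (u / δ) := by
      have h1 : Real.log (Q + 1) ≤ Real.log (2 * c₃ * (n : ℝ) ^ α) :=
        Real.log_le_log (by linarith) hq1
      have h2 : Real.log (2 * c₃ * (n : ℝ) ^ α) =
          Real.log (2 * c₃) + α * Real.log (n : ℝ) := by
        rw [Real.log_mul (by positivity) (by positivity), Real.log_rpow hnpos]
      have h3 : Real.log (n : ℝ) ≤ (n : ℝ) ^ δ / δ := Real.log_le_rpow_div hnpos.le hδ
      have h4 : α * Real.log (n : ℝ) ≤ α * (u / δ) := by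
        apply mul_le_mul_of_nonneg_left _ hα0.le
        rw [hudef]
        exact h3
      linarith
    have hBQ : u * u / (8 * c₃ ^ 3) ≤ (Bn : ℝ) / Q := by
      set A := (n : ℝ) ^ α with hAdef
      have hApos : (0 : ℝ) < A := by linarith
      have hc₃pos : (0 : ℝ) < c₃ := by linarith
      -- Bn ≥ n / (Q+1)^2 - 1
      have hdiv : (n : ℝ) < (Q + 1) ^ 2 * ((Bn : ℝ) + 1) := by
        have hNbpos : 0 < (q n + 1) ^ 2 := by positivity
        have h1 : n < (q n + 1) ^ 2 * (Bn + 1) := by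
          rw [hBndef]
          exact Nat.lt_mul_div_succ n hNbpos
        calc (n : ℝ) < (((q n + 1) ^ 2 * (Bn + 1) : ℕ) : ℝ) := by exact_mod_cast h1
          _ = (Q + 1) ^ 2 * ((Bn : ℝ) + 1) := by push_cast; ring
      have hQ2 : (Q + 1) ^ 2 ≤ 4 * c₃ ^ 2 * (A * A) := by
        have h := mul_self_le_mul_self (by linarith : (0 : ℝ) ≤ Q + 1) hq1
        calc (Q + 1) ^ 2 = (Q + 1) * (Q + 1) := by ring
          _ ≤ 2 * c₃ * A * (2 * c₃ * A) := h
          _ = 4 * c₃ ^ 2 * (A * A) := by ring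
      have hAA : (n : ℝ) ^ (1 - 2 * α) * (A * A) = (n : ℝ) := by
        rw [hAdef, ← Real.rpow_add hnpos, ← Real.rpow_add hnpos,
          show 1 - 2 * α + (α + α) = (1 : ℝ) by ring, Real.rpow_one]
      have hBn1 : (n : ℝ) ^ (1 - 2 * α) / (8 * c₃ ^ 2) ≤ (Bn : ℝ) := by
        have h1 : (n : ℝ) / ((Q + 1) ^ 2) ≤ (Bn : ℝ) + 1 := by
          rw [div_le_iff₀ (by positivity)]
          calc (n : ℝ) ≤ (Q + 1) ^ 2 * ((Bn : ℝ) + 1) := hdiv.le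
            _ = ((Bn : ℝ) + 1) * (Q + 1) ^ 2 := by ring
        have h2 : (n : ℝ) ^ (1 - 2 * α) / (4 * c₃ ^ 2) ≤ (n : ℝ) / ((Q + 1) ^ 2) := by
          rw [div_le_div_iff₀ (by positivity) (by positivity)]
          calc (n : ℝ) ^ (1 - 2 * α) * (Q + 1) ^ 2
              ≤ (n : ℝ) ^ (1 - 2 * α) * (4 * c₃ ^ 2 * (A * A)) := by
                apply mul_le_mul_of_nonneg_left hQ2 (by positivity)
            _ = (n : ℝ) * (4 * c₃ ^ 2) := by rw [← mul_assoc, mul_comm ((n:ℝ)^(1-2*α)) _, mul_assoc, hAA]; ring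
        have h3 : 8 * c₃ ^ 2 ≤ (n : ℝ) ^ (1 - 2 * α) := hbig
        have h4 : (0 : ℝ) < 8 * c₃ ^ 2 := by positivity
        have h5 : (n : ℝ) ^ (1 - 2 * α) / (4 * c₃ ^ 2) - (n : ℝ) ^ (1 - 2 * α) / (8 * c₃ ^ 2)
            = (n : ℝ) ^ (1 - 2 * α) / (8 * c₃ ^ 2) := by
          field_simp
          ring
        have h6 : (1 : ℝ) ≤ (n : ℝ) ^ (1 - 2 * α) / (8 * c₃ ^ 2) := by
          rw [le_div_iff₀ h4]
          linarith
        linarith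
      have hQc₃ : Q ≤ c₃ * A := le_trans hqn.2 hcA
      have huu : u * u = (n : ℝ) ^ (1 - 2 * α) / A := by
        rw [hudef, hAdef, ← Real.rpow_add hnpos, eq_div_iff (by positivity),
          ← Real.rpow_add hnpos]
        congr 1
        rw [hδdef]
        ring
      calc u * u / (8 * c₃ ^ 3) = ((n : ℝ) ^ (1 - 2 * α) / (8 * c₃ ^ 2)) / (c₃ * A) := by
            rw [huu, div_div, div_div]
            congr 1
            ring
        _ ≤ (Bn : ℝ) / (c₃ * A) := by gcongr
        _ ≤ (Bn : ℝ) / Q := by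
            have hBn0 : (0 : ℝ) ≤ (Bn : ℝ) := by positivity
            gcongr
    have hfinal : 3 * Real.log (Q + 1) - (Bn : ℝ) / Q ≤ -u := by
      have h1 : 3 * Real.log (Q + 1) ≤ 3 * Real.log (2 * c₃) + (3 * α / δ) * u := by
        have he : (3 * α / δ) * u = 3 * (α * (u / δ)) := by ring
        linarith
      have h2 : (3 * Real.log (2 * c₃) + 3 * α / δ + 1) * u ≤ u * u / (8 * c₃ ^ 3) := by
        rw [le_div_iff₀ (by positivity)]
        have h2a : U0 * u ≤ u * u := mul_le_mul_of_nonneg_right huU (by linarith)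
        have h2b : U0 * u = (3 * Real.log (2 * c₃) + 3 * α / δ + 1) * u * (8 * c₃ ^ 3) := by
          rw [hU0]; ring
        linarith
      have h3 : 0 ≤ 3 * α / δ := by positivity
      have hlogu : 3 * Real.log (2 * c₃) ≤ 3 * Real.log (2 * c₃) * u := by
        nlinarith [mul_nonneg hlogc₃ (by linarith : (0 : ℝ) ≤ u - 1)]
      have hCu : (3 * Real.log (2 * c₃) + 3 * α / δ + 1) * u =
          3 * Real.log (2 * c₃) * u + (3 * α / δ) * u + u := by ring
      have h4 : (3 * α / δ) * u ≤ (3 * α / δ) * u := le_rfl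
      linarith
    calc epsSeq q n ≤ Real.exp (3 * Real.log (Q + 1) - (Bn : ℝ) / Q) := hstep1
      _ ≤ Real.exp (-u) := Real.exp_le_exp.mpr hfinal
  have hnn : ∀ᶠ n : ℕ in atTop, 0 ≤ epsSeq q n := by
    filter_upwards [hqtop.eventually_ge_atTop 1] with n h1
    unfold epsSeq
    apply mul_nonneg (mul_nonneg (by positivity) (by positivity))
    apply pow_nonneg
    apply div_nonneg (by linarith) (by linarith)
  have hexp : Tendsto (fun n : ℕ => Real.exp (-((n : ℝ) ^ δ))) atTop (nhds 0) :=
    Real.tendsto_exp_atBot.comp (tendsto_neg_atTop_atBot.comp hutop)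
  exact tendsto_of_tendsto_of_tendsto_of_le_of_le' tendsto_const_nhds hexp hnn hmain

lemma ratio_tendsto {α : ℝ} (hα0 : 0 < α) (hα : α < 1 / 3) (q : ℕ → ℕ) {c₁ c₂ : ℝ}
    (hc₁ : 0 < c₁)
    (hq : ∀ᶠ n : ℕ in atTop, c₁ * (n : ℝ) ^ α ≤ (q n : ℝ) ∧ (q n : ℝ) ≤ c₂ * (n : ℝ) ^ α)
    (S : ∀ n : ℕ, Finset (Fin n → Fin (q n)))
    (hS : ∀ n w, 1 ≤ q n → goodWord n (q n) w → w ∈ S n) :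
    Tendsto (fun n : ℕ => ((S n).card : ℝ) / (q n : ℝ) ^ n) atTop (nhds 1) := by
  have heps := epsSeq_tendsto hα0 hα q hc₁ hq
  have hbase : Tendsto (fun n : ℕ => c₁ * (n : ℝ) ^ α) atTop atTop :=
    (Tendsto.const_mul_atTop hc₁ (tendsto_rpow_atTop hα0)).comp tendsto_natCast_atTop_atTop
  have hqtop : Tendsto (fun n : ℕ => (q n : ℝ)) atTop atTop := by
    apply tendsto_atTop_mono' atTop ?_ hbase
    filter_upwards [hq] with n hn
    exact hn.1
  apply tendsto_of_tendsto_of_tendsto_of_le_of_le' (g := fun n => 1 - epsSeq q n)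
    (h := fun _ => (1 : ℝ))
  · simpa using tendsto_const_nhds.sub heps
  · exact tendsto_const_nhds
  · filter_upwards [hqtop.eventually_ge_atTop 1] with n h1
    have hq1 : 1 ≤ q n := by exact_mod_cast h1
    have hq0 : (0 : ℝ) < (q n : ℝ) := by exact_mod_cast hq1
    have hqpos : (0 : ℝ) < (q n : ℝ) ^ n := pow_pos hq0 n
    have hcount := count_target' hq1 (S n) (fun w hw => hS n w hq1 hw)
    have hrc : (((q n + 1) ^ 2 * q n * ((q n - 1) ^ (n / (q n + 1) ^ 2) *
        (q n) ^ (n - n / (q n + 1) ^ 2)) : ℕ) : ℝ) = epsSeq q n * (q n : ℝ) ^ n := by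
      have hBle : n / (q n + 1) ^ 2 ≤ n := Nat.div_le_self _ _
      have hsplit : (q n : ℝ) ^ (n / (q n + 1) ^ 2) * (q n : ℝ) ^ (n - n / (q n + 1) ^ 2)
          = (q n : ℝ) ^ n := by
        rw [← pow_add]
        congr 1
        omega
      have hq0 : (0 : ℝ) < (q n : ℝ) := by exact_mod_cast hq1
      have hQBne : ((q n : ℝ)) ^ (n / (q n + 1) ^ 2) ≠ 0 := ne_of_gt (pow_pos hq0 _)
      unfold epsSeq
      rw [div_pow]
      push_cast [Nat.cast_sub hq1]
      rw [← hsplit]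
      field_simp
    have hc2 : (q n : ℝ) ^ n ≤ ((S n).card : ℝ) + epsSeq q n * (q n : ℝ) ^ n := by
      have hcast : ((q n ^ n : ℕ) : ℝ) ≤ (((S n).card +
          (q n + 1) ^ 2 * q n * ((q n - 1) ^ (n / (q n + 1) ^ 2) *
            (q n) ^ (n - n / (q n + 1) ^ 2)) : ℕ) : ℝ) := by
        exact_mod_cast hcount
      rw [Nat.cast_add, hrc] at hcast
      calc (q n : ℝ) ^ n = ((q n ^ n : ℕ) : ℝ) := by push_cast; ring
        _ ≤ _ := hcast
    rw [le_div_iff₀ hqpos]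
    nlinarith [hc2]
  · filter_upwards [hqtop.eventually_ge_atTop 1] with n h1
    have hq1 : 1 ≤ q n := by exact_mod_cast h1
    have hq0 : (0 : ℝ) < (q n : ℝ) := by exact_mod_cast hq1
    have hqpos : (0 : ℝ) < (q n : ℝ) ^ n := pow_pos hq0 n
    rw [div_le_one hqpos]
    have hcard := Finset.card_le_univ (S n)
    calc ((S n).card : ℝ) ≤ ((Finset.univ : Finset (Fin n → Fin (q n))).card : ℝ) := by
          exact_mod_cast hcard
      _ = (q n : ℝ) ^ n := by
          rw [Finset.card_univ]
          simp [Fintype.card_fun]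

end PartC
/-- If `q = Θ(n^α)` with `0 < α < 1/3`, then for a uniformly random word
`w ∈ W_{n,q}`, `W(w) = w₀` asymptotically almost surely; consequently, under
the Plancherel–Hecke measure (the pushforward of the uniform measure under
`Heckeshape`), the random shape equals the full staircase a.a.s. -/
theorem hecke_word_longest_aas (α : ℝ) (hα0 : 0 < α) (hα : α < 1 / 3)
    (q : ℕ → ℕ) (c₁ c₂ : ℝ) (hc₁ : 0 < c₁)
    (hq : ∀ᶠ n : ℕ in atTop, c₁ * (n : ℝ) ^ α ≤ (q n : ℝ) ∧ (q n : ℝ) ≤ c₂ * (n : ℝ) ^ α) :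
    Tendsto (fun n : ℕ =>
        ((Finset.univ.filter (fun w : Fin n → Fin (q n) =>
          heckeW (q n) (toWord w) = Fin.revPerm)).card : ℝ) / (q n : ℝ) ^ n)
      atTop (nhds 1)
    ∧ Tendsto (fun n : ℕ =>
        ((Finset.univ.filter (fun w : Fin n → Fin (q n) =>
          heckeShape (toWord w) = staircase (q n))).card : ℝ) / (q n : ℝ) ^ n)
      atTop (nhds 1) := by
  constructor
  · exact ratio_tendsto hα0 hα q hc₁ hq
      (fun n => Finset.univ.filter (fun w : Fin n → Fin (q n) =>
        heckeW (q n) (toWord w) = Fin.revPerm))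
      (fun n w hq1 hw => Finset.mem_filter.mpr ⟨Finset.mem_univ _, (goodWord_det hq1 hw).1⟩)
  · exact ratio_tendsto hα0 hα q hc₁ hq
      (fun n => Finset.univ.filter (fun w : Fin n → Fin (q n) =>
        heckeShape (toWord w) = staircase (q n)))
      (fun n w hq1 hw => Finset.mem_filter.mpr ⟨Finset.mem_univ _, (goodWord_det hq1 hw).2⟩)
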